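/- arXiv:2403.13386 — 7 statements merged into one kernel-verified Lean document; each statement's English description precedes it below -/
import Mathlib

section
/- Suppose X = ℝ^d, 𝒳 = C(ℝ; ℝ^d), and f : ℝ^d → ℝ is such that the function F₀(f) : 𝒳 → ℝ, F₀(f)(x) = f(x(0)), satisfies: for every x ∈ 𝒳 the limit lim_{t→0} (f(x(t)) − f(x(0)))/t exists. Then f is constant. (Proof idea: for x₀, v ∈ ℝ^d consider the path x(t) = x₀ + |t| v; existence of the two-sided limit forces all directional derivatives of f to vanish.) -/
open Filter Topology

/-- Key lemma: one-sided directional difference quotients vanish. -/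
lemma aux_right_dq_zero {d : ℕ} (f : (Fin d → ℝ) → ℝ)
    (hf : ∀ x : ℝ → (Fin d → ℝ), Continuous x →
      ∃ L : ℝ, Filter.Tendsto (fun t : ℝ => (f (x t) - f (x 0)) / t)
        (nhdsWithin 0 {(0:ℝ)}ᶜ) (nhds L))
    (p v : Fin d → ℝ) :
    Filter.Tendsto (fun s : ℝ => (f (p + s • v) - f p) / s) (𝓝[>] (0:ℝ)) (𝓝 0) := by
  set x : ℝ → (Fin d → ℝ) := fun s => p + |s| • v with hx
  have hcx : Continuous x := by
    apply Continuous.add continuous_const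
    exact (continuous_abs).smul continuous_const
  obtain ⟨L, hL⟩ := hf x hcx
  have hx0 : x 0 = p := by simp [hx]
  set q : ℝ → ℝ := fun s => (f (x s) - f (x 0)) / s with hq
  -- q is odd
  have hodd : ∀ s : ℝ, q (-s) = - q s := by
    intro s
    simp [hq, hx, abs_neg, div_neg]
  -- compose with negation
  have hneg : Filter.Tendsto (fun s : ℝ => -s) (𝓝[≠] (0:ℝ)) (𝓝[≠] (0:ℝ)) := by
    apply Filter.Tendsto.inf
    · simpa using (continuous_neg.tendsto (0:ℝ))
    · apply tendsto_principal_principal.2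
      intro s hs
      simpa using hs
  have h1 : Filter.Tendsto (fun s => q (-s)) (𝓝[≠] (0:ℝ)) (𝓝 L) := hL.comp hneg
  have h2 : Filter.Tendsto (fun s => q (-s)) (𝓝[≠] (0:ℝ)) (𝓝 (-L)) := by
    simpa [hodd] using hL.neg
  have hL0 : L = 0 := by
    have := tendsto_nhds_unique h1 h2
    linarith
  subst hL0
  have hmono : Filter.Tendsto q (𝓝[>] (0:ℝ)) (𝓝 0) :=
    hL.mono_left (nhdsWithin_mono _ (fun s hs => by
      simp only [Set.mem_compl_iff, Set.mem_singleton_iff]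
      exact ne_of_gt hs))
  apply hmono.congr'
  filter_upwards [self_mem_nhdsWithin] with s hs
  simp [hq, hx, abs_of_pos (Set.mem_Ioi.mp hs), hx0]

/-- Let `𝒳 = C(ℝ; ℝ^d)` and `f : ℝ^d → ℝ` be such that for every continuous path `x` the
limit `lim_{t→0} (f (x t) − f (x 0))/t` exists (i.e. the evaluation functional
`F₀(f) : x ↦ f (x 0)` is differentiable along the shift group on every path).
Then `f` is constant. -/
theorem eval_functional_in_domain_implies_constant
    {d : ℕ} (f : (Fin d → ℝ) → ℝ)
    (hf : ∀ x : ℝ → (Fin d → ℝ), Continuous x →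
      ∃ L : ℝ, Filter.Tendsto (fun t : ℝ => (f (x t) - f (x 0)) / t)
        (nhdsWithin 0 {(0:ℝ)}ᶜ) (nhds L)) :
    ∀ a b : Fin d → ℝ, f a = f b := by
  intro a b
  set w : Fin d → ℝ := b - a with hw
  set g : ℝ → ℝ := fun t => f (a + t • w) with hg
  have hderiv : ∀ t : ℝ, HasDerivAt g 0 t := by
    intro t
    rw [hasDerivAt_iff_tendsto_slope]
    rw [← nhdsLT_sup_nhdsGT t, tendsto_sup]
    constructor
    · -- left: use direction -w
      have hq := aux_right_dq_zero f hf (a + t • w) (-w)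
      have hsub : Filter.Tendsto (fun u : ℝ => t - u) (𝓝[<] t) (𝓝[>] (0:ℝ)) := by
        apply Filter.Tendsto.inf
        · simpa using (continuous_sub_left t).tendsto t
        · apply tendsto_principal_principal.2
          intro u hu
          simpa using hu
      have := (hq.comp hsub).neg
      rw [neg_zero] at this
      apply this.congr'
      filter_upwards [self_mem_nhdsWithin] with u hu
      have h1 : a + t • w + (t - u) • (-w) = a + u • w := by
        module
      simp only [Function.comp, h1, slope_def_field, hg]
      rw [show u - t = -(t - u) from by ring, div_neg]
    · -- right: use direction w
      have hq := aux_right_dq_zero f hf (a + t • w) w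
      have hsub : Filter.Tendsto (fun u : ℝ => u - t) (𝓝[>] t) (𝓝[>] (0:ℝ)) := by
        apply Filter.Tendsto.inf
        · simpa using (continuous_sub_right t).tendsto t
        · apply tendsto_principal_principal.2
          intro u hu
          simpa using hu
      apply (hq.comp hsub).congr'
      filter_upwards [self_mem_nhdsWithin] with u hu
      have h1 : a + t • w + (u - t) • w = a + u • w := by module
      simp only [Function.comp, h1, slope_def_field, hg]
  have hconst : ∀ s t : ℝ, g s = g t :=
    is_const_of_deriv_eq_zero (fun t => (hderiv t).differentiableAt)
      (fun t => (hderiv t).deriv)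
  have := hconst 0 1
  simpa [hg, hw] using this
end

section
/- Let 𝔼 be a Markovian kernel operator on B_b(𝒳) with kernel k. If for every F ∈ B_b(𝒳) the function 𝔼F is ℱ₀₋-measurable and 𝔼F = F whenever F is ℱ₀₋-measurable, then for all A₋ ∈ ℱ₀₋, A ∈ 𝔅(𝒳), and x ∈ 𝒳: k(x, A₋ ∩ A) = δ_{τ(x)}(A₋) · k(τ(x), A). -/
open MeasureTheory Set Filter Topology
open scoped ENNReal

/-- The σ-algebra on a set `𝒳` of paths `ℝ → X` generated by the evaluation maps
`π_t : x ↦ x t` for `t ∈ I`. -/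
def evalSigma {X : Type*} [m : MeasurableSpace X] (𝒳 : Set (ℝ → X)) (I : Set ℝ) :
    MeasurableSpace 𝒳 :=
  ⨆ t ∈ I, MeasurableSpace.comap (fun x : 𝒳 => x.1 t) m


lemma kernel_factorization_key {Y : Type*} (m0 : MeasurableSpace Y) [m : MeasurableSpace Y]
    (hle : m0 ≤ m)
    (τ : Y → Y) (hτ : ∀ A : Set Y, MeasurableSet[m0] A → τ ⁻¹' A = A)
    (k : Y → Measure Y) (hprob : ∀ x, IsProbabilityMeasure (k x))
    (hEmeas : ∀ F : Y → ℝ, (∃ C, ∀ x, |F x| ≤ C) → Measurable F →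
      @Measurable Y ℝ m0 _ (fun x => ∫ y, F y ∂(k x)))
    (hEproj : ∀ F : Y → ℝ, (∃ C, ∀ x, |F x| ≤ C) → @Measurable Y ℝ m0 _ F →
      ∀ x, ∫ y, F y ∂(k x) = F x) :
    ∀ Am : Set Y, MeasurableSet[m0] Am → ∀ A : Set Y, MeasurableSet A →
      ∀ x : Y, k x (Am ∩ A) = Measure.dirac (τ x) Am * k (τ x) A := by
  intro Am hAm A hA x
  haveI := hprob
  have hAmB : MeasurableSet Am := hle _ hAm
  -- the indicator of Am as a real function
  set F : Y → ℝ := Am.indicator 1 with hF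
  have hFb : ∃ C, ∀ z, |F z| ≤ C := ⟨1, by
    intro z; by_cases hz : z ∈ Am <;> simp [hF, indicator_of_mem, indicator_of_notMem, hz]⟩
  have hFm0 : @Measurable Y ℝ m0 _ F := by
    letI : MeasurableSpace Y := m0
    exact measurable_const.indicator hAm
  have hproj := hEproj F hFb hFm0
  have hint : ∀ z, ∫ y, F y ∂(k z) = (k z Am).toReal := by
    intro z; exact integral_indicator_one hAmB
  -- k z Am = indicator
  have hkAm : ∀ z : Y, (k z Am).toReal = F z := by
    intro z; rw [← hint z]; exact hproj z
  -- invariance of G = E F under τ for ℱ₀₋-measurable functions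
  have hinv : ∀ (B : Set Y), MeasurableSet B → k (τ x) B = k x B := by
    intro B hB
    set FB : Y → ℝ := B.indicator 1 with hFB
    have hFBb : ∃ C, ∀ z, |FB z| ≤ C := ⟨1, by
      intro z; by_cases hz : z ∈ B <;>
        simp [hFB, indicator_of_mem, indicator_of_notMem, hz]⟩
    have hFBm : Measurable FB := measurable_const.indicator hB
    set G : Y → ℝ := fun z => ∫ y, FB y ∂(k z) with hG
    have hGm0 : @Measurable Y ℝ m0 _ G := hEmeas FB hFBb hFBm
    have hS : MeasurableSet[m0] (G ⁻¹' {G x}) := hGm0 (measurableSet_singleton _)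
    have hfix : G (τ x) = G x := by
      have hx : x ∈ G ⁻¹' {G x} := rfl
      have := hτ _ hS
      have : τ x ∈ G ⁻¹' {G x} := by
        rw [← this] at hx; exact hx
      simpa using this
    have h1 : G (τ x) = (k (τ x) B).toReal := integral_indicator_one hB
    have h2 : G x = (k x B).toReal := integral_indicator_one hB
    have := h1 ▸ h2 ▸ hfix
    exact (ENNReal.toReal_eq_toReal_iff' (measure_ne_top _ _) (measure_ne_top _ _)).mp this
  have hτmem : τ x ∈ Am ↔ x ∈ Am := by
    constructor
    · intro h; rw [← hτ Am hAm]; exact h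
    · intro h
      have h' : x ∈ τ ⁻¹' Am := by rw [hτ Am hAm]; exact h
      exact h'
  have hdirac : Measure.dirac (τ x) Am = Am.indicator 1 (τ x) :=
    Measure.dirac_apply' _ hAmB
  by_cases hx : x ∈ Am
  · have hτx : τ x ∈ Am := hτmem.mpr hx
    have hk1 : k x Am = 1 := by
      have := hkAm x
      rw [hF, indicator_of_mem hx] at this
      simp only [Pi.one_apply] at this
      exact (ENNReal.toReal_eq_one_iff _).mp this
    have hcompl : k x Amᶜ = 0 := by
      have := prob_compl_eq_zero_iff hAmB (μ := k x)
      exact this.mpr hk1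
    have hLHS : k x (Am ∩ A) = k x A := by
      refine le_antisymm (measure_mono inter_subset_right) ?_
      have hsub : A ⊆ (Am ∩ A) ∪ (Amᶜ ∩ A) := by
        intro z hz
        by_cases hzm : z ∈ Am
        · exact Or.inl ⟨hzm, hz⟩
        · exact Or.inr ⟨hzm, hz⟩
      calc k x A ≤ k x ((Am ∩ A) ∪ (Amᶜ ∩ A)) := measure_mono hsub
        _ ≤ k x (Am ∩ A) + k x (Amᶜ ∩ A) := measure_union_le _ _
        _ ≤ k x (Am ∩ A) + k x Amᶜ :=
            add_le_add_right (measure_mono inter_subset_left) _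
        _ = k x (Am ∩ A) := by rw [hcompl, add_zero]
    rw [hLHS, hdirac, indicator_of_mem hτx, hinv A hA]
    simp
  · have hτx : τ x ∉ Am := fun h => hx (hτmem.mp h)
    have hk0 : k x Am = 0 := by
      have := hkAm x
      rw [hF, indicator_of_notMem hx] at this
      rcases ENNReal.toReal_eq_zero_iff _ |>.mp this with h | h
      · exact h
      · exact absurd h (measure_ne_top _ _)
    have hLHS : k x (Am ∩ A) = 0 :=
      measure_mono_null inter_subset_left hk0
    rw [hLHS, hdirac, indicator_of_notMem hτx]
    simp


/-- Let `𝔼` be a Markovian kernel operator on `B_b(𝒳)` with kernel `k`,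
`(𝔼 F)(x) = ∫ F dk(x,·)`.  If for every bounded measurable `F` the function `𝔼 F` is
`ℱ₀₋`-measurable, and `𝔼 F = F` whenever `F` is `ℱ₀₋`-measurable, then
`k(x, A₋ ∩ A) = δ_{τ(x)}(A₋) · k(τ(x), A)` for all `A₋ ∈ ℱ₀₋`, `A` Borel and `x ∈ 𝒳`. -/
theorem expectation_operator_kernel_factorization
    {X : Type*} [MetricSpace X] [CompleteSpace X]
    [TopologicalSpace.SeparableSpace X] [MeasurableSpace X] [BorelSpace X]
    (𝒳 : Set (ℝ → X))
    (τ : 𝒳 → 𝒳)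
    (hτinv : ∀ A : Set 𝒳, MeasurableSet[evalSigma 𝒳 (Set.Iio 0)] A → τ ⁻¹' A = A)
    (k : 𝒳 → @Measure 𝒳 (evalSigma 𝒳 Set.univ))
    (hprob : ∀ x, IsProbabilityMeasure (k x))
    (hkmeas : ∀ A : Set 𝒳, MeasurableSet[evalSigma 𝒳 Set.univ] A →
      @Measurable 𝒳 ℝ≥0∞ (evalSigma 𝒳 Set.univ) _ (fun x => k x A))
    (hEmeas : ∀ F : 𝒳 → ℝ, (∃ C, ∀ x, |F x| ≤ C) →
      @Measurable 𝒳 ℝ (evalSigma 𝒳 Set.univ) _ F →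
      @Measurable 𝒳 ℝ (evalSigma 𝒳 (Set.Iio 0)) _ (fun x => ∫ y, F y ∂(k x)))
    (hEproj : ∀ F : 𝒳 → ℝ, (∃ C, ∀ x, |F x| ≤ C) →
      @Measurable 𝒳 ℝ (evalSigma 𝒳 (Set.Iio 0)) _ F →
      ∀ x, ∫ y, F y ∂(k x) = F x) :
    ∀ Am : Set 𝒳, MeasurableSet[evalSigma 𝒳 (Set.Iio 0)] Am →
      ∀ A : Set 𝒳, MeasurableSet[evalSigma 𝒳 Set.univ] A →
        ∀ x : 𝒳, k x (Am ∩ A) =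
          @Measure.dirac 𝒳 (evalSigma 𝒳 Set.univ) (τ x) Am * k (τ x) A := by
  have hle : evalSigma 𝒳 (Set.Iio 0) ≤ evalSigma 𝒳 Set.univ := by
    unfold evalSigma
    exact biSup_mono (fun t _ => trivial)
  exact @kernel_factorization_key 𝒳 (evalSigma 𝒳 (Set.Iio 0)) (evalSigma 𝒳 Set.univ)
    hle τ hτinv k hprob hEmeas hEproj
end

section
/- Let 𝔼 be a Markovian kernel operator on B_b(𝒳) with kernel k such that k(x, A₋ ∩ A) = δ_{τ(x)}(A₋)·k(τ(x), A) for all A₋ ∈ ℱ₀₋, A ∈ 𝔅(𝒳), x ∈ 𝒳. Then 𝔼(FG) = F·𝔼G for all bounded measurable F, G with F being ℱ₀₋-measurable, and 𝔼F is ℱ₀₋-measurable for every bounded measurable F. -/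
open MeasureTheory Set Filter Topology
open scoped ENNReal

lemma aux_module {Ω : Type*} (mm : MeasurableSpace Ω) [m : MeasurableSpace Ω] (hle : mm ≤ m)
    (τ : Ω → Ω) (hτmeas : @Measurable Ω Ω mm m τ)
    (hτinv : ∀ A : Set Ω, MeasurableSet[mm] A → τ ⁻¹' A = A)
    (k : Ω → Measure Ω) (hprob : ∀ x, IsProbabilityMeasure (k x))
    (hkmeas : ∀ A : Set Ω, MeasurableSet A → Measurable fun x => k x A)
    (hfact : ∀ Am : Set Ω, MeasurableSet[mm] Am → ∀ A : Set Ω, MeasurableSet A → ∀ x : Ω,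
      k x (Am ∩ A) = Measure.dirac (τ x) Am * k (τ x) A) :
    (∀ F G : Ω → ℝ,
      @Measurable Ω ℝ mm _ F →
      Measurable G →
      ∀ x, ∫ y, F y * G y ∂(k x) = F x * ∫ y, G y ∂(k x)) ∧
    (∀ F : Ω → ℝ, Measurable F →
      @Measurable Ω ℝ mm _ (fun x => ∫ y, F y ∂(k x))) := by
  -- k x = k (τ x)
  have hkeq : ∀ x, k x = k (τ x) := by
    intro x
    ext A hA
    haveI := hprob (τ x)
    have h := hfact univ (@MeasurableSet.univ Ω mm) A hA x
    simpa [measure_univ] using h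
  -- for mm-measurable Am: k x Am = dirac (τ x) Am
  have hdirac : ∀ (Am : Set Ω), MeasurableSet[mm] Am → ∀ x,
      k x Am = Measure.dirac (τ x) Am := by
    intro Am hAm x
    haveI := hprob (τ x)
    have h := hfact Am hAm univ MeasurableSet.univ x
    simpa [measure_univ] using h
  -- F constant a.e. with value F x
  have hFae : ∀ (F : Ω → ℝ), @Measurable Ω ℝ mm _ F → ∀ x,
      F =ᵐ[k x] fun _ => F x := by
    intro F hF x
    set Am : Set Ω := F ⁻¹' {F x} with hAmdef
    have hAm : MeasurableSet[mm] Am := hF (measurableSet_singleton _)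
    have hτx : τ x ∈ Am := by
      have hx : x ∈ Am := rfl
      rw [← hτinv Am hAm] at hx
      exact hx
    have h1 : k x Am = 1 := by
      rw [hdirac Am hAm x]
      exact Measure.dirac_apply_of_mem hτx
    have h0 : k x Amᶜ = 0 := by
      haveI := hprob x
      rw [measure_compl (hle _ hAm) (measure_ne_top _ _), h1, measure_univ]
      simp
    refine Filter.eventuallyEq_of_mem (by rwa [mem_ae_iff] : Am ∈ ae (k x)) ?_
    intro y hy
    exact hy
  constructor
  · intro F G hF hG x
    have h1 : (fun y => F y * G y) =ᵐ[k x] fun y => F x * G y := by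
      filter_upwards [hFae F hF x] with y hy
      rw [hy]
    rw [integral_congr_ae h1, integral_const_mul]
  · intro F hF
    -- build kernel
    set κ : ProbabilityTheory.Kernel Ω Ω := ⟨k, Measure.measurable_of_measurable_coe _ hkmeas⟩ with hκ
    haveI : ProbabilityTheory.IsMarkovKernel κ := ⟨hprob⟩
    have hmeas : Measurable fun x => ∫ y, F y ∂(k x) := by
      have : StronglyMeasurable (Function.uncurry fun (_ : Ω) (y : Ω) => F y) :=
        (hF.comp measurable_snd).stronglyMeasurable
      exact (this.integral_kernel_prod_right (κ := κ)).measurable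
    have heq : (fun x => ∫ y, F y ∂(k x)) = (fun x => ∫ y, F y ∂(k x)) ∘ τ := by
      funext x
      simp only [Function.comp_apply]
      rw [hkeq x]
    rw [heq]
    exact @Measurable.comp Ω Ω ℝ mm m _ _ _ hmeas hτmeas

/-- Let `𝔼` be a Markovian kernel operator on `B_b(𝒳)` with kernel `k` such that
`k(x, A₋ ∩ A) = δ_{τ(x)}(A₋) · k(τ(x), A)` for all `A₋ ∈ ℱ₀₋`, `A` Borel and `x`.
Then `𝔼(FG) = F · 𝔼G` for all bounded measurable `F, G` with `F` being
`ℱ₀₋`-measurable, and `𝔼 F` is `ℱ₀₋`-measurable for every bounded measurable `F`. -/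
theorem kernel_factorization_implies_module_property
    {X : Type*} [MetricSpace X] [CompleteSpace X]
    [TopologicalSpace.SeparableSpace X] [MeasurableSpace X] [BorelSpace X]
    (𝒳 : Set (ℝ → X))
    (τ : 𝒳 → 𝒳)
    (hτmeas : @Measurable 𝒳 𝒳 (evalSigma 𝒳 (Set.Iio 0)) (evalSigma 𝒳 Set.univ) τ)
    (hτinv : ∀ A : Set 𝒳, MeasurableSet[evalSigma 𝒳 (Set.Iio 0)] A → τ ⁻¹' A = A)
    (hτidem : τ ∘ τ = τ)
    (k : 𝒳 → @Measure 𝒳 (evalSigma 𝒳 Set.univ))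
    (hprob : ∀ x, IsProbabilityMeasure (k x))
    (hkmeas : ∀ A : Set 𝒳, MeasurableSet[evalSigma 𝒳 Set.univ] A →
      @Measurable 𝒳 ℝ≥0∞ (evalSigma 𝒳 Set.univ) _ (fun x => k x A))
    (hfact : ∀ Am : Set 𝒳, MeasurableSet[evalSigma 𝒳 (Set.Iio 0)] Am →
      ∀ A : Set 𝒳, MeasurableSet[evalSigma 𝒳 Set.univ] A →
        ∀ x : 𝒳, k x (Am ∩ A) =
          @Measure.dirac 𝒳 (evalSigma 𝒳 Set.univ) (τ x) Am * k (τ x) A) :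
    (∀ F G : 𝒳 → ℝ, (∃ C, ∀ x, |F x| ≤ C) →
      @Measurable 𝒳 ℝ (evalSigma 𝒳 (Set.Iio 0)) _ F →
      (∃ C, ∀ x, |G x| ≤ C) →
      @Measurable 𝒳 ℝ (evalSigma 𝒳 Set.univ) _ G →
      ∀ x, ∫ y, F y * G y ∂(k x) = F x * ∫ y, G y ∂(k x)) ∧
    (∀ F : 𝒳 → ℝ, (∃ C, ∀ x, |F x| ≤ C) →
      @Measurable 𝒳 ℝ (evalSigma 𝒳 Set.univ) _ F →
      @Measurable 𝒳 ℝ (evalSigma 𝒳 (Set.Iio 0)) _ (fun x => ∫ y, F y ∂(k x))) := by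
  have hle : evalSigma 𝒳 (Set.Iio 0) ≤ evalSigma 𝒳 Set.univ := by
    simp only [evalSigma]
    exact iSup₂_le fun t _ => le_iSup₂_of_le t (Set.mem_univ t) le_rfl
  obtain ⟨h1, h2⟩ := @aux_module 𝒳 (evalSigma 𝒳 (Set.Iio 0)) (evalSigma 𝒳 Set.univ) hle
    τ hτmeas hτinv k hprob hkmeas hfact
  exact ⟨fun F G _ hF _ hG => h1 F G hF hG, fun F _ hF => h2 F hF⟩
end

section
/- Let 𝔼 be an expectation operator (a Markovian kernel operator with 𝔼F ℱ₀₋-measurable for all F ∈ B_b(𝒳), and 𝔼F = F for ℱ₀₋-measurable F) and define 𝔼_t := Θ_t 𝔼 Θ_{−t}. Then 𝔼 is homogeneous (𝔼 = 𝔼𝔼_t for all t ≥ 0) if and only if its kernel k satisfies ∫ k(ϑ_t y, ϑ_t A) k(x, dy) = k(x, A) for every x ∈ 𝒳, t ≥ 0, and Borel A ⊂ 𝒳. -/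
open MeasureTheory Set Filter Topology
open scoped ENNReal

/-- Let `𝔼` be an expectation operator with kernel `k`, and `𝔼_t := Θ_t 𝔼 Θ_{−t}` where
`Θ_t F = F ∘ ϑ_t`.  Then `𝔼` is homogeneous, i.e. `𝔼 = 𝔼 𝔼_t` for all `t ≥ 0`, if and
only if `∫ k(ϑ_t y, ϑ_t A) k(x, dy) = k(x, A)` for every `x`, `t ≥ 0` and Borel `A`. -/
theorem expectation_operator_homogeneous_iff_kernel_identity
    {X : Type*} [MetricSpace X] [CompleteSpace X]
    [TopologicalSpace.SeparableSpace X] [MeasurableSpace X] [BorelSpace X]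
    (𝒳 : Set (ℝ → X)) (ϑ : ℝ → 𝒳 → 𝒳)
    (hϑ : ∀ (t : ℝ) (x : 𝒳) (s : ℝ), (ϑ t x).1 s = x.1 (t + s))
    (hzero : ∀ x, ϑ 0 x = x)
    (hgroup : ∀ (s t : ℝ) (x : 𝒳), ϑ s (ϑ t x) = ϑ (s + t) x)
    (hϑmeas : ∀ t : ℝ,
      @Measurable 𝒳 𝒳 (evalSigma 𝒳 Set.univ) (evalSigma 𝒳 Set.univ) (ϑ t))
    (k : 𝒳 → @Measure 𝒳 (evalSigma 𝒳 Set.univ))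
    (hprob : ∀ x, IsProbabilityMeasure (k x))
    (hkmeas : ∀ A : Set 𝒳, MeasurableSet[evalSigma 𝒳 Set.univ] A →
      @Measurable 𝒳 ℝ≥0∞ (evalSigma 𝒳 Set.univ) _ (fun x => k x A))
    (hEmeas : ∀ F : 𝒳 → ℝ, (∃ C, ∀ x, |F x| ≤ C) →
      @Measurable 𝒳 ℝ (evalSigma 𝒳 Set.univ) _ F →
      @Measurable 𝒳 ℝ (evalSigma 𝒳 (Set.Iio 0)) _ (fun x => ∫ y, F y ∂(k x)))
    (hEproj : ∀ F : 𝒳 → ℝ, (∃ C, ∀ x, |F x| ≤ C) →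
      @Measurable 𝒳 ℝ (evalSigma 𝒳 (Set.Iio 0)) _ F →
      ∀ x, ∫ y, F y ∂(k x) = F x) :
    (∀ t : ℝ, 0 ≤ t → ∀ F : 𝒳 → ℝ, (∃ C, ∀ x, |F x| ≤ C) →
      @Measurable 𝒳 ℝ (evalSigma 𝒳 Set.univ) _ F →
      ∀ x, ∫ y, (∫ z, F (ϑ (-t) z) ∂(k (ϑ t y))) ∂(k x) = ∫ y, F y ∂(k x)) ↔
    (∀ x : 𝒳, ∀ t : ℝ, 0 ≤ t → ∀ A : Set 𝒳, MeasurableSet[evalSigma 𝒳 Set.univ] A →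
      ∫⁻ y, k (ϑ t y) (ϑ t '' A) ∂(k x) = k x A) := by
  letI m𝒳 : MeasurableSpace 𝒳 := evalSigma 𝒳 Set.univ
  haveI := hprob
  -- basic facts about the flow
  have hinv : ∀ (t : ℝ) (x : 𝒳), ϑ t (ϑ (-t) x) = x := by
    intro t x; rw [hgroup, add_neg_cancel, hzero]
  have hinv' : ∀ (t : ℝ) (x : 𝒳), ϑ (-t) (ϑ t x) = x := by
    intro t x; rw [hgroup, neg_add_cancel, hzero]
  have himg : ∀ (t : ℝ) (A : Set 𝒳), ϑ t '' A = ϑ (-t) ⁻¹' A := by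
    intro t A
    ext z; constructor
    · rintro ⟨a, ha, rfl⟩; simpa [hinv'] using ha
    · intro hz; exact ⟨ϑ (-t) z, hz, hinv t z⟩
  have himgmeas : ∀ (t : ℝ) (A : Set 𝒳), MeasurableSet A → MeasurableSet (ϑ t '' A) := by
    intro t A hA; rw [himg]; exact hϑmeas (-t) hA
  -- measurability of k
  have hk : Measurable k := Measure.measurable_of_measurable_coe k (fun s hs => hkmeas s hs)
  constructor
  · -- homogeneous → kernel identity
    intro H x t ht A hA
    set F : 𝒳 → ℝ := A.indicator 1 with hF
    have hFbd : ∃ C, ∀ x, |F x| ≤ C := ⟨1, fun x => by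
      by_cases h : x ∈ A <;> simp [hF, Set.indicator_apply, h]⟩
    have hFmeas : Measurable F := (measurable_one.indicator hA)
    have key := H t ht F hFbd hFmeas x
    have hcomp : ∀ z : 𝒳, F (ϑ (-t) z) = (ϑ t '' A).indicator 1 z := by
      intro z
      by_cases h : z ∈ ϑ t '' A
      · have : ϑ (-t) z ∈ A := by rwa [himg] at h
        simp [hF, Set.indicator_of_mem h, Set.indicator_of_mem this]
      · have : ϑ (-t) z ∉ A := by rwa [himg] at h
        simp [hF, Set.indicator_of_notMem h, Set.indicator_of_notMem this]
    have hinner : ∀ y : 𝒳, (∫ z, F (ϑ (-t) z) ∂(k (ϑ t y)))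
        = (k (ϑ t y) (ϑ t '' A)).toReal := by
      intro y
      simp_rw [hcomp]
      exact integral_indicator_one (himgmeas t A hA)
    simp_rw [hinner, hF, integral_indicator_one hA] at key
    have hmeas : Measurable (fun y => k (ϑ t y) (ϑ t '' A)) :=
      (hkmeas _ (himgmeas t A hA)).comp (hϑmeas t)
    have hlt : ∀ y, k (ϑ t y) (ϑ t '' A) < ∞ := fun y =>
      lt_of_le_of_lt prob_le_one (by norm_num)
    rw [integral_toReal hmeas.aemeasurable (ae_of_all _ hlt)] at key
    have hfin1 : ∫⁻ y, k (ϑ t y) (ϑ t '' A) ∂(k x) ≠ ∞ := by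
      have hle : ∫⁻ y, k (ϑ t y) (ϑ t '' A) ∂(k x) ≤ 1 := by
        calc ∫⁻ y, k (ϑ t y) (ϑ t '' A) ∂(k x)
            ≤ ∫⁻ _, 1 ∂(k x) := lintegral_mono fun y => prob_le_one
          _ = 1 := by simp
      exact ne_of_lt (lt_of_le_of_lt hle ENNReal.one_lt_top)
    have hfin2 : k x A ≠ ∞ := ne_of_lt (lt_of_le_of_lt prob_le_one (by norm_num))
    exact (ENNReal.toReal_eq_toReal_iff' hfin1 hfin2).mp key
  · -- kernel identity → homogeneous
    intro H t ht F hFbd hFmeas x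
    obtain ⟨C, hC⟩ := hFbd
    -- the measure-valued map and the bind measure
    set μ : 𝒳 → Measure 𝒳 := fun y => (k (ϑ t y)).map (ϑ (-t)) with hμdef
    have hμmeas : Measurable μ :=
      (Measure.measurable_map _ (hϑmeas (-t))).comp (hk.comp (hϑmeas t))
    haveI : ∀ y, IsProbabilityMeasure (μ y) := fun y =>
      Measure.isProbabilityMeasure_map (hϑmeas (-t)).aemeasurable
    have hbind : (k x).bind μ = k x := by
      ext A hA
      rw [Measure.bind_apply hA hμmeas.aemeasurable]
      have : ∀ y, μ y A = k (ϑ t y) (ϑ t '' A) := by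
        intro y
        rw [hμdef]
        simp only
        rw [Measure.map_apply (hϑmeas (-t)) hA, himg]
      simp_rw [this]
      exact H x t ht A hA
    -- key lintegral identity
    have K : ∀ f : 𝒳 → ℝ≥0∞, Measurable f →
        ∫⁻ y, (∫⁻ z, f (ϑ (-t) z) ∂(k (ϑ t y))) ∂(k x) = ∫⁻ z, f z ∂(k x) := by
      intro f hf
      conv_rhs => rw [← hbind]
      rw [Measure.lintegral_bind hμmeas.aemeasurable hf.aemeasurable]
      congr 1
      ext y
      rw [hμdef]
      simp only
      rw [lintegral_map hf (hϑmeas (-t))]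
    -- positive and negative parts
    set fp : 𝒳 → ℝ≥0∞ := fun z => ENNReal.ofReal (F z) with hfp
    set fm : 𝒳 → ℝ≥0∞ := fun z => ENNReal.ofReal (-F z) with hfm
    have hfpm : Measurable fp := hFmeas.ennreal_ofReal
    have hfmm : Measurable fm := hFmeas.neg.ennreal_ofReal
    have hfple : ∀ z, fp z ≤ ENNReal.ofReal C := fun z =>
      ENNReal.ofReal_le_ofReal (le_trans (le_abs_self _) (hC z))
    have hfmle : ∀ z, fm z ≤ ENNReal.ofReal C := fun z =>
      ENNReal.ofReal_le_ofReal (le_trans (neg_le_abs _) (hC z))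
    have hintF : ∀ ν : Measure 𝒳, IsProbabilityMeasure ν → ∀ G : 𝒳 → ℝ, Measurable G →
        (∀ z, |G z| ≤ C) → Integrable G ν := by
      intro ν hν G hG hGC
      exact ⟨hG.aestronglyMeasurable,
        HasFiniteIntegral.of_bounded (C := C) (ae_of_all _ fun z => by
          simpa [Real.norm_eq_abs] using hGC z)⟩
    -- integral formula for any probability measure
    have hrep : ∀ ν : Measure 𝒳, IsProbabilityMeasure ν →
        ∫ z, F z ∂ν = (∫⁻ z, fp z ∂ν).toReal - (∫⁻ z, fm z ∂ν).toReal := by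
      intro ν hν
      exact integral_eq_lintegral_pos_part_sub_lintegral_neg_part
        (hintF ν hν F hFmeas hC)
    -- rewrite the inner integral
    have hinner : ∀ y : 𝒳, ∫ z, F (ϑ (-t) z) ∂(k (ϑ t y))
        = (∫⁻ z, fp (ϑ (-t) z) ∂(k (ϑ t y))).toReal
          - (∫⁻ z, fm (ϑ (-t) z) ∂(k (ϑ t y))).toReal := by
      intro y
      exact integral_eq_lintegral_pos_part_sub_lintegral_neg_part
        (hintF _ (hprob _) _ (hFmeas.comp (hϑmeas (-t))) (fun z => hC _))
    simp_rw [hinner]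
    -- measurability and bounds of the lintegral maps
    have hLpm : Measurable (fun y => ∫⁻ z, fp (ϑ (-t) z) ∂(k (ϑ t y))) :=
      (Measure.measurable_lintegral (hfpm.comp (hϑmeas (-t)))).comp (hk.comp (hϑmeas t))
    have hLmm : Measurable (fun y => ∫⁻ z, fm (ϑ (-t) z) ∂(k (ϑ t y))) :=
      (Measure.measurable_lintegral (hfmm.comp (hϑmeas (-t)))).comp (hk.comp (hϑmeas t))
    have hLple : ∀ y, ∫⁻ z, fp (ϑ (-t) z) ∂(k (ϑ t y)) ≤ ENNReal.ofReal C := fun y =>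
      le_trans (lintegral_mono fun z => hfple _) (by simp [lintegral_const])
    have hLmle : ∀ y, ∫⁻ z, fm (ϑ (-t) z) ∂(k (ϑ t y)) ≤ ENNReal.ofReal C := fun y =>
      le_trans (lintegral_mono fun z => hfmle _) (by simp [lintegral_const])
    have hLplt : ∀ y, ∫⁻ z, fp (ϑ (-t) z) ∂(k (ϑ t y)) < ∞ := fun y =>
      lt_of_le_of_lt (hLple y) ENNReal.ofReal_lt_top
    have hLmlt : ∀ y, ∫⁻ z, fm (ϑ (-t) z) ∂(k (ϑ t y)) < ∞ := fun y =>
      lt_of_le_of_lt (hLmle y) ENNReal.ofReal_lt_top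
    have hCnn : 0 ≤ C := le_trans (abs_nonneg _) (hC x)
    -- integrability of the two toReal pieces
    have hip : Integrable (fun y => (∫⁻ z, fp (ϑ (-t) z) ∂(k (ϑ t y))).toReal) (k x) := by
      refine hintF _ (hprob x) _ hLpm.ennreal_toReal (fun y => ?_)
      rw [abs_of_nonneg ENNReal.toReal_nonneg]
      calc (∫⁻ z, fp (ϑ (-t) z) ∂(k (ϑ t y))).toReal
          ≤ (ENNReal.ofReal C).toReal :=
            ENNReal.toReal_mono ENNReal.ofReal_ne_top (hLple y)
        _ = C := ENNReal.toReal_ofReal hCnn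
    have him : Integrable (fun y => (∫⁻ z, fm (ϑ (-t) z) ∂(k (ϑ t y))).toReal) (k x) := by
      refine hintF _ (hprob x) _ hLmm.ennreal_toReal (fun y => ?_)
      rw [abs_of_nonneg ENNReal.toReal_nonneg]
      calc (∫⁻ z, fm (ϑ (-t) z) ∂(k (ϑ t y))).toReal
          ≤ (ENNReal.ofReal C).toReal :=
            ENNReal.toReal_mono ENNReal.ofReal_ne_top (hLmle y)
        _ = C := ENNReal.toReal_ofReal hCnn
    rw [integral_sub hip him,
      integral_toReal hLpm.aemeasurable (ae_of_all _ hLplt),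
      integral_toReal hLmm.aemeasurable (ae_of_all _ hLmlt),
      K fp hfpm, K fm hfmm, hrep (k x) (hprob x)]
end

section
/- Let 𝔼 be a homogeneous expectation operator on B_b(𝒳) and define 𝕋(t) := 𝔼 Θ_t for t ≥ 0. Then (𝕋(t))_{t≥0} is a semigroup of Markovian kernel operators on the space of ℱ₀₋-measurable bounded functions, and 𝕋(t) Θ_{−t} F = F for every ℱ₀₋-measurable bounded F and t ≥ 0. -/
open MeasureTheory Set Filter Topology
open scoped ENNReal

/-- Let `𝔼` be a homogeneous expectation operator with kernel `k` and define
`𝕋(t) := 𝔼 Θ_t`, i.e. `(𝕋(t) F)(x) = ∫ F (ϑ_t y) k(x, dy)`.  Then `(𝕋(t))_{t ≥ 0}` is a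
semigroup of Markovian kernel operators on the space of bounded `ℱ₀₋`-measurable
functions, and `𝕋(t) Θ_{−t} F = F` for every such `F` and `t ≥ 0`. -/
theorem homogeneous_expectation_gives_evolutionary_semigroup
    {X : Type*} [MetricSpace X] [CompleteSpace X]
    [TopologicalSpace.SeparableSpace X] [MeasurableSpace X] [BorelSpace X]
    (𝒳 : Set (ℝ → X)) (ϑ : ℝ → 𝒳 → 𝒳)
    (hϑ : ∀ (t : ℝ) (x : 𝒳) (s : ℝ), (ϑ t x).1 s = x.1 (t + s))
    (hzero : ∀ x, ϑ 0 x = x)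
    (hgroup : ∀ (s t : ℝ) (x : 𝒳), ϑ s (ϑ t x) = ϑ (s + t) x)
    (hϑmeas : ∀ t : ℝ,
      @Measurable 𝒳 𝒳 (evalSigma 𝒳 Set.univ) (evalSigma 𝒳 Set.univ) (ϑ t))
    (k : 𝒳 → @Measure 𝒳 (evalSigma 𝒳 Set.univ))
    (hprob : ∀ x, IsProbabilityMeasure (k x))
    (hkmeas : ∀ A : Set 𝒳, MeasurableSet[evalSigma 𝒳 Set.univ] A →
      @Measurable 𝒳 ℝ≥0∞ (evalSigma 𝒳 Set.univ) _ (fun x => k x A))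
    (hEmeas : ∀ F : 𝒳 → ℝ, (∃ C, ∀ x, |F x| ≤ C) →
      @Measurable 𝒳 ℝ (evalSigma 𝒳 Set.univ) _ F →
      @Measurable 𝒳 ℝ (evalSigma 𝒳 (Set.Iio 0)) _ (fun x => ∫ y, F y ∂(k x)))
    (hEproj : ∀ F : 𝒳 → ℝ, (∃ C, ∀ x, |F x| ≤ C) →
      @Measurable 𝒳 ℝ (evalSigma 𝒳 (Set.Iio 0)) _ F →
      ∀ x, ∫ y, F y ∂(k x) = F x)
    (hhom : ∀ t : ℝ, 0 ≤ t → ∀ F : 𝒳 → ℝ, (∃ C, ∀ x, |F x| ≤ C) →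
      @Measurable 𝒳 ℝ (evalSigma 𝒳 Set.univ) _ F →
      ∀ x, ∫ y, (∫ z, F (ϑ (-t) z) ∂(k (ϑ t y))) ∂(k x) = ∫ y, F y ∂(k x)) :
    ∀ F : 𝒳 → ℝ, (∃ C, ∀ x, |F x| ≤ C) →
      @Measurable 𝒳 ℝ (evalSigma 𝒳 (Set.Iio 0)) _ F →
      -- `𝕋(t)` maps bounded `ℱ₀₋`-measurable functions to bounded `ℱ₀₋`-measurable ones
      (∀ t : ℝ, 0 ≤ t →
        (@Measurable 𝒳 ℝ (evalSigma 𝒳 (Set.Iio 0)) _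
            (fun x => ∫ y, F (ϑ t y) ∂(k x)) ∧
          ∃ C, ∀ x, |∫ y, F (ϑ t y) ∂(k x)| ≤ C)) ∧
      -- semigroup law `𝕋(t) 𝕋(s) = 𝕋(t + s)` and `𝕋(0) = I`
      (∀ t s : ℝ, 0 ≤ t → 0 ≤ s → ∀ x,
        ∫ y, (∫ z, F (ϑ s z) ∂(k (ϑ t y))) ∂(k x) = ∫ y, F (ϑ (t + s) y) ∂(k x)) ∧
      (∀ x, ∫ y, F (ϑ 0 y) ∂(k x) = F x) ∧
      -- `𝕋(t) Θ_{−t} F = F`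
      (∀ t : ℝ, 0 ≤ t → ∀ x, ∫ y, F (ϑ (-t) (ϑ t y)) ∂(k x) = F x) := by
  intro F ⟨C, hC⟩ hF
  have hle : evalSigma 𝒳 (Set.Iio 0) ≤ evalSigma 𝒳 Set.univ := by
    unfold evalSigma
    exact biSup_mono (fun t _ => Set.mem_univ t)
  have hFu : @Measurable 𝒳 ℝ (evalSigma 𝒳 Set.univ) _ F := hF.mono hle le_rfl
  have hcomp : ∀ t : ℝ, @Measurable 𝒳 ℝ (evalSigma 𝒳 Set.univ) _ (fun y => F (ϑ t y)) :=
    fun t => hFu.comp (hϑmeas t)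
  have hbdd : ∀ t : ℝ, ∃ C', ∀ x, |F (ϑ t x)| ≤ C' := fun t => ⟨C, fun x => hC _⟩
  refine ⟨?_, ?_, ?_, ?_⟩
  · intro t _
    refine ⟨hEmeas _ (hbdd t) (hcomp t), C, fun x => ?_⟩
    haveI := hprob x
    calc |∫ y, F (ϑ t y) ∂(k x)| ≤ ∫ y, |F (ϑ t y)| ∂(k x) := by
          simpa [Real.norm_eq_abs] using
            norm_integral_le_integral_norm (μ := k x) (fun y => F (ϑ t y))
      _ ≤ ∫ _y, C ∂(k x) := by
          refine integral_mono_of_nonneg (Filter.Eventually.of_forall fun y => abs_nonneg _)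
            (integrable_const C) (Filter.Eventually.of_forall fun y => hC _)
      _ = C := by simp
  · intro t s ht hs x
    have := hhom t ht (fun y => F (ϑ (t + s) y)) (hbdd (t + s)) (hcomp (t + s)) x
    have hts : t + s + -t = s := by ring
    simpa only [hgroup, hts] using this
  · intro x
    simp only [hzero]
    exact hEproj F ⟨C, hC⟩ hF x
  · intro t _ x
    simp only [hgroup, neg_add_cancel, hzero]
    exact hEproj F ⟨C, hC⟩ hF x
end

section
/- Let 𝕋 be an evolutionary semigroup with homogeneous expectation operator 𝔼, and write ℙ^x for the probability measure k(x,·) where k is the kernel of 𝔼. Then for every bounded measurable F and t ≥ 0, the conditional expectation of F given ℱ_{t−} under ℙ^x is ℙ^x-a.s. equal to 𝔼_t F, where 𝔼_t = Θ_t 𝔼 Θ_{−t}. -/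
open MeasureTheory Set Filter Topology
open scoped ENNReal

/-- Let `𝕋` be an evolutionary semigroup with homogeneous expectation operator `𝔼`,
whose kernel is `k`; write `ℙ^x := k(x, ·)`.  Then for every bounded measurable `F` and
`t ≥ 0`, the conditional expectation of `F` given `ℱ_{t−}` under `ℙ^x` is `ℙ^x`-a.s.
equal to `𝔼_t F`, where `(𝔼_t F)(y) = ∫ F (ϑ_{−t} z) k(ϑ_t y, dz)`; formalized via the
defining property of conditional expectation: `𝔼_t F` is `ℱ_{t−}`-measurable and has the
same integral as `F` over every `A ∈ ℱ_{t−}`. -/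
theorem evolutionary_conditional_expectation
    {X : Type*} [MetricSpace X] [CompleteSpace X]
    [TopologicalSpace.SeparableSpace X] [MeasurableSpace X] [BorelSpace X]
    (𝒳 : Set (ℝ → X)) (ϑ : ℝ → 𝒳 → 𝒳)
    (hϑ : ∀ (t : ℝ) (x : 𝒳) (s : ℝ), (ϑ t x).1 s = x.1 (t + s))
    (hzero : ∀ x, ϑ 0 x = x)
    (hgroup : ∀ (s t : ℝ) (x : 𝒳), ϑ s (ϑ t x) = ϑ (s + t) x)
    (hϑmeas : ∀ (s : ℝ) (I : Set ℝ),
      @Measurable 𝒳 𝒳 (evalSigma 𝒳 ((fun r => r + s) '' I)) (evalSigma 𝒳 I) (ϑ s))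
    (k : 𝒳 → @Measure 𝒳 (evalSigma 𝒳 Set.univ))
    (hprob : ∀ x, IsProbabilityMeasure (k x))
    (hkmeas : ∀ A : Set 𝒳, MeasurableSet[evalSigma 𝒳 Set.univ] A →
      @Measurable 𝒳 ℝ≥0∞ (evalSigma 𝒳 Set.univ) _ (fun x => k x A))
    (hEmeas : ∀ F : 𝒳 → ℝ, (∃ C, ∀ x, |F x| ≤ C) →
      @Measurable 𝒳 ℝ (evalSigma 𝒳 Set.univ) _ F →
      @Measurable 𝒳 ℝ (evalSigma 𝒳 (Set.Iio 0)) _ (fun x => ∫ y, F y ∂(k x)))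
    (hEproj : ∀ F : 𝒳 → ℝ, (∃ C, ∀ x, |F x| ≤ C) →
      @Measurable 𝒳 ℝ (evalSigma 𝒳 (Set.Iio 0)) _ F →
      ∀ x, ∫ y, F y ∂(k x) = F x)
    (hhom : ∀ t : ℝ, 0 ≤ t → ∀ F : 𝒳 → ℝ, (∃ C, ∀ x, |F x| ≤ C) →
      @Measurable 𝒳 ℝ (evalSigma 𝒳 Set.univ) _ F →
      ∀ x, ∫ y, (∫ z, F (ϑ (-t) z) ∂(k (ϑ t y))) ∂(k x) = ∫ y, F y ∂(k x)) :
    ∀ F : 𝒳 → ℝ, (∃ C, ∀ x, |F x| ≤ C) →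
      @Measurable 𝒳 ℝ (evalSigma 𝒳 Set.univ) _ F →
      ∀ t : ℝ, 0 ≤ t → ∀ x : 𝒳,
        @Measurable 𝒳 ℝ (evalSigma 𝒳 (Set.Iio t)) _
          (fun y => ∫ z, F (ϑ (-t) z) ∂(k (ϑ t y))) ∧
        ∀ A : Set 𝒳, MeasurableSet[evalSigma 𝒳 (Set.Iio t)] A →
          ∫ y in A, (∫ z, F (ϑ (-t) z) ∂(k (ϑ t y))) ∂(k x) = ∫ y in A, F y ∂(k x) := by
  intro F hFbd hFmeas t ht x
  obtain ⟨C, hC⟩ := hFbd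
  -- monotonicity of evalSigma
  have hmono : ∀ {I J : Set ℝ}, I ⊆ J → evalSigma 𝒳 I ≤ evalSigma 𝒳 J := by
    intro I J h
    exact biSup_mono h
  have hle0 : evalSigma 𝒳 (Set.Iio (0:ℝ)) ≤ evalSigma 𝒳 Set.univ := hmono (by simp)
  have hlet : evalSigma 𝒳 (Set.Iio t) ≤ evalSigma 𝒳 Set.univ := hmono (by simp)
  -- image set equalities
  have himg1 : (fun r => r + (-t)) '' (Set.univ : Set ℝ) = Set.univ := by
    ext r; simp only [Set.image_univ, Set.mem_range, Set.mem_univ, iff_true]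
    exact ⟨r + t, by ring⟩
  have himg2 : (fun r => r + t) '' (Set.Iio (0:ℝ)) = Set.Iio t := by
    ext r
    simp only [Set.mem_image, Set.mem_Iio]
    constructor
    · rintro ⟨a, ha, rfl⟩; linarith
    · intro h; exact ⟨r - t, by linarith, by ring⟩
  have himg3 : (fun r => r + (-t)) '' (Set.Iio t) = Set.Iio (0:ℝ) := by
    ext r
    simp only [Set.mem_image, Set.mem_Iio]
    constructor
    · rintro ⟨a, ha, rfl⟩; linarith
    · intro h; exact ⟨r + t, by linarith, by ring⟩
  -- measurability of shifts
  have hθneg : @Measurable 𝒳 𝒳 (evalSigma 𝒳 Set.univ) (evalSigma 𝒳 Set.univ) (ϑ (-t)) := by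
    have := hϑmeas (-t) Set.univ
    rwa [himg1] at this
  have hθt : @Measurable 𝒳 𝒳 (evalSigma 𝒳 (Set.Iio t)) (evalSigma 𝒳 (Set.Iio 0)) (ϑ t) := by
    have := hϑmeas t (Set.Iio 0)
    rwa [himg2] at this
  have hθnegt : @Measurable 𝒳 𝒳 (evalSigma 𝒳 (Set.Iio 0)) (evalSigma 𝒳 (Set.Iio t)) (ϑ (-t)) := by
    have := hϑmeas (-t) (Set.Iio t)
    rwa [himg3] at this
  -- measurability of 𝔼_t F
  have hFθ : @Measurable 𝒳 ℝ (evalSigma 𝒳 Set.univ) _ (fun z => F (ϑ (-t) z)) :=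
    hFmeas.comp hθneg
  have hG : @Measurable 𝒳 ℝ (evalSigma 𝒳 (Set.Iio 0)) _ (fun w => ∫ z, F (ϑ (-t) z) ∂(k w)) :=
    hEmeas _ ⟨C, fun z => hC _⟩ hFθ
  have goal1 : @Measurable 𝒳 ℝ (evalSigma 𝒳 (Set.Iio t)) _
      (fun y => ∫ z, F (ϑ (-t) z) ∂(k (ϑ t y))) := hG.comp hθt
  refine ⟨goal1, fun A hA => ?_⟩
  letI : MeasurableSpace 𝒳 := evalSigma 𝒳 Set.univ
  have hAU : MeasurableSet[evalSigma 𝒳 Set.univ] A := hlet _ hA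
  -- kernel of the projection on sets in ℱ₀₋
  have hind1 : ∀ B : Set 𝒳, MeasurableSet[evalSigma 𝒳 (Set.Iio 0)] B → ∀ w : 𝒳,
      w ∈ B → k w B = 1 := by
    intro B hB w hw
    haveI := hprob w
    have hBU : MeasurableSet[evalSigma 𝒳 Set.univ] B := hle0 _ hB
    have h1 := hEproj (B.indicator fun _ => (1:ℝ))
      ⟨1, by intro z; by_cases hz : z ∈ B <;> simp [hz]⟩
      (measurable_const.indicator hB) w
    rw [integral_indicator_const (1:ℝ) hBU] at h1
    simp only [hw, Set.indicator_of_mem, smul_eq_mul, mul_one] at h1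
    exact (ENNReal.toReal_eq_one_iff _).mp h1
  have hind0 : ∀ B : Set 𝒳, MeasurableSet[evalSigma 𝒳 (Set.Iio 0)] B → ∀ w : 𝒳,
      w ∉ B → k w B = 0 := by
    intro B hB w hw
    haveI := hprob w
    have hBU : MeasurableSet[evalSigma 𝒳 Set.univ] B := hle0 _ hB
    have h1 := hEproj (B.indicator fun _ => (1:ℝ))
      ⟨1, by intro z; by_cases hz : z ∈ B <;> simp [hz]⟩
      (measurable_const.indicator hB) w
    rw [integral_indicator_const (1:ℝ) hBU] at h1
    rw [Set.indicator_of_notMem hw, smul_eq_mul, mul_one] at h1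
    rcases (ENNReal.toReal_eq_zero_iff _).mp h1 with h | h
    · exact h
    · exact absurd h (measure_ne_top _ _)
  -- set B = preimage of A under ϑ (-t)
  set B : Set 𝒳 := ϑ (-t) ⁻¹' A with hBdef
  have hB0 : MeasurableSet[evalSigma 𝒳 (Set.Iio 0)] B := hθnegt hA
  have hBU : MeasurableSet[evalSigma 𝒳 Set.univ] B := hle0 _ hB0
  have hmem : ∀ y : 𝒳, ϑ t y ∈ B ↔ y ∈ A := by
    intro y
    simp only [hBdef, Set.mem_preimage, hgroup, neg_add_cancel, hzero]
  -- key pointwise identity: 1_A ⋅ 𝔼_t F = 𝔼_t (1_A ⋅ F)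
  have key : ∀ y : 𝒳, A.indicator (fun y => ∫ z, F (ϑ (-t) z) ∂(k (ϑ t y))) y
      = ∫ z, A.indicator F (ϑ (-t) z) ∂(k (ϑ t y)) := by
    intro y
    haveI := hprob (ϑ t y)
    have hrw : (fun z => A.indicator F (ϑ (-t) z))
        = B.indicator (fun z => F (ϑ (-t) z)) := by
      funext z
      by_cases hz : ϑ (-t) z ∈ A <;>
        simp [Set.indicator, hz, hBdef, Set.mem_preimage]
    rw [hrw, integral_indicator hBU]
    by_cases hy : y ∈ A
    · have hkB : k (ϑ t y) B = 1 := hind1 B hB0 (ϑ t y) ((hmem y).mpr hy)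
      have hres : (k (ϑ t y)).restrict B = k (ϑ t y) := by
        apply Measure.restrict_eq_self_of_ae_mem
        have hcompl : k (ϑ t y) Bᶜ = 0 := by
          have := measure_compl hBU (measure_ne_top (k (ϑ t y)) B)
          rw [hkB, measure_univ] at this
          simpa using this
        exact ae_iff.mpr hcompl
      rw [Set.indicator_of_mem hy, hres]
    · have hkB : k (ϑ t y) B = 0 := hind0 B hB0 (ϑ t y) (fun h => hy ((hmem y).mp h))
      rw [Set.indicator_of_notMem hy, Measure.restrict_eq_zero.mpr hkB]
      simp
  -- bounded measurable indicator function 1_A ⋅ F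
  have hAFbd : ∃ C', ∀ z, |A.indicator F z| ≤ C' := by
    refine ⟨max C 0, fun z => ?_⟩
    by_cases hz : z ∈ A
    · simp only [hz, Set.indicator_of_mem]
      exact le_max_of_le_left (hC z)
    · simp [hz]
  have hAFmeas : @Measurable 𝒳 ℝ (evalSigma 𝒳 Set.univ) _ (A.indicator F) :=
    hFmeas.indicator hAU
  -- put it together
  calc ∫ y in A, (∫ z, F (ϑ (-t) z) ∂(k (ϑ t y))) ∂(k x)
      = ∫ y, A.indicator (fun y => ∫ z, F (ϑ (-t) z) ∂(k (ϑ t y))) y ∂(k x) :=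
        (integral_indicator hAU).symm
    _ = ∫ y, (∫ z, A.indicator F (ϑ (-t) z) ∂(k (ϑ t y))) ∂(k x) :=
        integral_congr_ae (Filter.Eventually.of_forall key)
    _ = ∫ y, A.indicator F y ∂(k x) := hhom t ht _ hAFbd hAFmeas x
    _ = ∫ y in A, F y ∂(k x) := integral_indicator hAU
end

section
/- Let T be a transition semigroup on a Polish space X such that the domain of its full generator L_full is bp-dense in B_b(X). Then T is uniquely determined by L_full: if T₁ and T₂ are transition semigroups with the same full generator, then T₁(t) = T₂(t) for all t ≥ 0. -/
open MeasureTheory Set Filter Topology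
open scoped ENNReal

/-- The transition operator `T(t)` associated to the transition kernels `k`:
`(T(t) f)(x) = ∫ f dk(t, x, ·)`. -/
noncomputable def TOp {X : Type*} [MeasurableSpace X] (k : ℝ → X → Measure X)
    (t : ℝ) (f : X → ℝ) (x : X) : ℝ :=
  ∫ y, f y ∂(k t x)

/-- A set `M` of functions is bp-closed if it is closed under bounded pointwise limits of
sequences. -/
def BPClosed {X : Type*} (M : Set (X → ℝ)) : Prop :=
  ∀ (F : ℕ → X → ℝ) (f : X → ℝ), (∀ n, F n ∈ M) →
    (∃ C, ∀ n x, |F n x| ≤ C) →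
    (∀ x, Filter.Tendsto (fun n => F n x) Filter.atTop (nhds (f x))) → f ∈ M

/-- `(f, g)` belongs to the full generator of the transition semigroup with kernels `k`. -/
def InFullGen {X : Type*} [MeasurableSpace X] (k : ℝ → X → Measure X)
    (f g : X → ℝ) : Prop :=
  (∃ C, ∀ x, |f x| ≤ C) ∧ Measurable f ∧ (∃ C, ∀ x, |g x| ≤ C) ∧ Measurable g ∧
    ∀ t, 0 < t → ∀ x, TOp k t f x - f x = ∫ s in Set.Ioc (0:ℝ) t, TOp k s g x


lemma integrable_of_bdd {X : Type*} [MeasurableSpace X] {μ : Measure X} [IsFiniteMeasure μ]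
    {f : X → ℝ} {C : ℝ} (hm : Measurable f) (hb : ∀ x, |f x| ≤ C) : Integrable f μ :=
  Integrable.mono' (integrable_const C) hm.aestronglyMeasurable
    (ae_of_all _ fun x => by simpa [Real.norm_eq_abs] using hb x)

lemma integral_l_exp_neg {l : ℝ} (hl : 0 < l) (r : ℝ) :
    ∫ s in Ioi r, l * Real.exp (-(l * s)) = Real.exp (-(l * r)) := by
  rw [integral_const_mul]
  have h1 : ∫ s in Ioi r, Real.exp (-(l * s)) = l⁻¹ • ∫ x in Ioi (l * r), Real.exp (-x) := by
    simpa using integral_comp_mul_left_Ioi (fun x => Real.exp (-x)) r hl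
  rw [h1, integral_exp_neg_Ioi, smul_eq_mul]
  field_simp

lemma integrableOn_exp_neg {l : ℝ} (hl : 0 < l) (r : ℝ) :
    IntegrableOn (fun s => Real.exp (-(l * s))) (Ioi r) := by
  simpa [neg_mul] using exp_neg_integrableOn_Ioi r hl

lemma integrable_exp_mul_bdd {l : ℝ} (hl : 0 < l) {ψ : ℝ → ℝ} {C : ℝ}
    (hm : Measurable ψ) {r : ℝ} (hb : ∀ s ∈ Ioi r, |ψ s| ≤ C) :
    IntegrableOn (fun s => Real.exp (-(l * s)) * ψ s) (Ioi r) := by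
  refine Integrable.mono' (((integrableOn_exp_neg hl r).const_mul C)) ?_ ?_
  · exact ((Real.measurable_exp.comp ((measurable_const.mul measurable_id).neg)).mul
      hm).aestronglyMeasurable
  · refine (ae_restrict_mem measurableSet_Ioi).mono fun s hs => ?_
    have h1 : |ψ s| ≤ C := hb s hs
    have h2 : (0:ℝ) < Real.exp (-(l * s)) := Real.exp_pos _
    rw [Real.norm_eq_abs, abs_mul, abs_of_pos h2, mul_comm C]
    exact mul_le_mul_of_nonneg_left h1 h2.le

-- bound s * exp (-(l*s)) ≤ (2/l) * exp (-(l/2) * s) for s ≥ 0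
lemma mul_exp_le {l : ℝ} (hl : 0 < l) {s : ℝ} (hs : 0 ≤ s) :
    s * Real.exp (-(l * s)) ≤ (2 / l) * Real.exp (-(l / 2 * s)) := by
  have key : s ≤ 2 / l * Real.exp (l / 2 * s) := by
    have h := Real.add_one_le_exp (l / 2 * s)
    have h2 : l / 2 * s ≤ Real.exp (l / 2 * s) := by nlinarith [Real.exp_pos (l/2*s)]
    calc s = (2 / l) * (l / 2 * s) := by field_simp
    _ ≤ 2 / l * Real.exp (l / 2 * s) := by
        apply mul_le_mul_of_nonneg_left h2 (by positivity)
  calc s * Real.exp (-(l * s)) ≤ (2 / l * Real.exp (l / 2 * s)) * Real.exp (-(l * s)) := by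
        apply mul_le_mul_of_nonneg_right key (Real.exp_pos _).le
  _ = (2 / l) * Real.exp (-(l / 2 * s)) := by
        rw [mul_assoc, ← Real.exp_add]; ring_nf

lemma integrableOn_bdd_meas {f : ℝ → ℝ} {C : ℝ} (hm : Measurable f) (hb : ∀ x, |f x| ≤ C)
    {s : Set ℝ} (hs : volume s < ∞) : IntegrableOn f s volume := by
  refine Integrable.mono' (g := fun _ => C) (integrableOn_const hs.ne)
    hm.aestronglyMeasurable ?_
  exact ae_of_all _ fun x => by simpa [Real.norm_eq_abs] using hb x

/-- Triangle Fubini, unbounded version. -/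
lemma tri_Ioi {γ : ℝ → ℝ} {C : ℝ} (hm : Measurable γ) (hb : ∀ s, |γ s| ≤ C) {l : ℝ}
    (hl : 0 < l) :
    ∫ s in Ioi (0:ℝ), (l * Real.exp (-(l * s))) * ∫ u in Ioc (0:ℝ) s, γ u
      = ∫ u in Ioi (0:ℝ), Real.exp (-(l * u)) * γ u := by
  have hC : 0 ≤ C := le_trans (abs_nonneg _) (hb 0)
  set μ := volume.restrict (Ioi (0:ℝ)) with hμ
  set S : Set (ℝ × ℝ) := {p | 0 < p.2 ∧ p.2 ≤ p.1} with hS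
  have hSm : MeasurableSet S :=
    (measurableSet_lt measurable_const measurable_snd).inter
      (measurableSet_le measurable_snd measurable_fst)
  set G : ℝ × ℝ → ℝ := fun p => (l * Real.exp (-(l * p.1))) * γ p.2 with hG
  have hGm : Measurable G := by
    apply Measurable.mul
    · exact (measurable_const.mul ((Real.measurable_exp.comp
        ((measurable_const.mul measurable_fst).neg))))
    · exact hm.comp measurable_snd
  set F : ℝ × ℝ → ℝ := S.indicator G with hF
  have hFm : Measurable F := hGm.indicator hSm
  -- sections in u
  have ha : ∀ s, (fun u => F (s, u)) =
      (Ioc (0:ℝ) s).indicator (fun u => (l * Real.exp (-(l * s))) * γ u) := by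
    intro s; funext u
    simp only [hF, hS, Set.indicator_apply, Set.mem_setOf_eq, Set.mem_Ioc, hG]
  -- sections in s
  have hbu : ∀ u, 0 < u → (fun s => F (s, u)) =
      (Ici u).indicator (fun s => (l * Real.exp (-(l * s))) * γ u) := by
    intro u hu; funext s
    simp only [hF, hS, Set.indicator_apply, Set.mem_setOf_eq, Set.mem_Ici, hG]
    by_cases h : u ≤ s <;> simp [h, hu]
  have hsec : ∀ s, Integrable (fun u => F (s, u)) μ := by
    intro s
    rw [ha s]
    apply IntegrableOn.integrable_indicator _ measurableSet_Ioc
    show Integrable _ (μ.restrict (Ioc (0:ℝ) s))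
    rw [hμ, Measure.restrict_restrict measurableSet_Ioc]
    refine integrableOn_bdd_meas (measurable_const.mul hm)
      (C := l * Real.exp (-(l * s)) * C) (fun x => ?_) ?_
    · simp only [Pi.mul_apply]; rw [abs_mul]
      have : |l * Real.exp (-(l * s))| = l * Real.exp (-(l * s)) :=
        abs_of_pos (by positivity)
      rw [this]
      exact mul_le_mul_of_nonneg_left (hb x) (by positivity)
    · exact lt_of_le_of_lt (measure_mono inter_subset_left) measure_Ioc_lt_top
  have hnormbound : ∀ s ∈ Ioi (0:ℝ), ∫ u, ‖F (s, u)‖ ∂μ ≤ (2 * C) * Real.exp (-(l / 2 * s)) := by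
    intro s hs
    have step1 : ∫ u, ‖F (s, u)‖ ∂μ ≤
        ∫ u, (Ioc (0:ℝ) s).indicator (fun _ => l * Real.exp (-(l * s)) * C) u ∂μ := by
      refine integral_mono (hsec s).norm ?_ ?_
      · refine IntegrableOn.integrable_indicator ?_ measurableSet_Ioc
        refine integrableOn_const (ne_of_lt ?_)
        rw [hμ, Measure.restrict_apply measurableSet_Ioc]
        exact lt_of_le_of_lt (measure_mono inter_subset_left) measure_Ioc_lt_top
      · intro u
        have hfu := congrFun (ha s) u
        show ‖F (s, u)‖ ≤ _
        rw [hfu, norm_indicator_eq_indicator_norm]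
        apply Set.indicator_le_indicator
        rw [Real.norm_eq_abs, abs_mul]
        have : |l * Real.exp (-(l * s))| = l * Real.exp (-(l * s)) :=
          abs_of_pos (by positivity)
        rw [this]
        exact mul_le_mul_of_nonneg_left (hb u) (by positivity)
    have step2 : ∫ u, (Ioc (0:ℝ) s).indicator (fun _ => l * Real.exp (-(l * s)) * C) u ∂μ
        = (μ (Ioc 0 s)).toReal * (l * Real.exp (-(l * s)) * C) := by
      rw [integral_indicator_const _ measurableSet_Ioc]; simp [smul_eq_mul, Measure.real]
    have step3 : (μ (Ioc 0 s)).toReal = s := by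
      rw [hμ, Measure.restrict_apply measurableSet_Ioc]
      have : Ioc (0:ℝ) s ∩ Ioi 0 = Ioc 0 s := by
        apply inter_eq_left.2; exact Ioc_subset_Ioi_self
      rw [this, Real.volume_Ioc]
      simp [ENNReal.toReal_ofReal (le_of_lt hs)]
    have step4 : s * (l * Real.exp (-(l * s)) * C) ≤ 2 * C * Real.exp (-(l / 2 * s)) := by
      have h1 := mul_exp_le hl (le_of_lt hs)
      calc s * (l * Real.exp (-(l * s)) * C) = (l * C) * (s * Real.exp (-(l * s))) := by ring
      _ ≤ (l * C) * ((2 / l) * Real.exp (-(l / 2 * s))) :=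
          mul_le_mul_of_nonneg_left h1 (by positivity)
      _ = 2 * C * Real.exp (-(l / 2 * s)) := by field_simp
    calc ∫ u, ‖F (s, u)‖ ∂μ ≤ _ := step1
    _ = (μ (Ioc 0 s)).toReal * (l * Real.exp (-(l * s)) * C) := step2
    _ = s * (l * Real.exp (-(l * s)) * C) := by rw [step3]
    _ ≤ 2 * C * Real.exp (-(l / 2 * s)) := step4
  have hint : Integrable F (μ.prod μ) := by
    rw [integrable_prod_iff hFm.aestronglyMeasurable]
    constructor
    · exact ae_of_all _ hsec
    · refine Integrable.mono' (((integrableOn_exp_neg (by positivity : (0:ℝ) < l / 2)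
        0).const_mul (2 * C))) ?_ ?_
      · exact (hFm.norm.stronglyMeasurable.integral_prod_right').aestronglyMeasurable
      · filter_upwards [ae_restrict_mem measurableSet_Ioi] with s hs
        rw [Real.norm_eq_abs, abs_of_nonneg (integral_nonneg (fun u => norm_nonneg _))]
        exact hnormbound s hs
  have swap := integral_integral_swap (f := fun s u => F (s, u)) (μ := μ) (ν := μ) hint
  calc ∫ s in Ioi (0:ℝ), (l * Real.exp (-(l * s))) * ∫ u in Ioc (0:ℝ) s, γ u
      = ∫ s, (∫ u, F (s, u) ∂μ) ∂μ := by
        refine (setIntegral_congr_ae measurableSet_Ioi (ae_of_all _ fun s hs => ?_)).symm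
        rw [ha s, integral_indicator measurableSet_Ioc, hμ,
          Measure.restrict_restrict measurableSet_Ioc]
        have : Ioc (0:ℝ) s ∩ Ioi 0 = Ioc 0 s := inter_eq_left.2 Ioc_subset_Ioi_self
        rw [this, integral_const_mul]
  _ = ∫ u, (∫ s, F (s, u) ∂μ) ∂μ := swap
  _ = ∫ u in Ioi (0:ℝ), Real.exp (-(l * u)) * γ u := by
        refine setIntegral_congr_ae measurableSet_Ioi (ae_of_all _ fun u hu => ?_)
        rw [hbu u hu, integral_indicator measurableSet_Ici, hμ,
          Measure.restrict_restrict measurableSet_Ici]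
        have : Ici u ∩ Ioi 0 = Ici u := inter_eq_left.2 (Ici_subset_Ioi.2 hu)
        rw [this, integral_Ici_eq_integral_Ioi]
        rw [integral_mul_const, integral_l_exp_neg hl u, mul_comm]

lemma interval_exp {l : ℝ} (hl : 0 < l) (a b : ℝ) :
    ∫ s in a..b, l * Real.exp (l * s) = Real.exp (l * b) - Real.exp (l * a) := by
  have h1 : ∀ x ∈ uIcc a b, HasDerivAt (fun s => Real.exp (l * s)) (l * Real.exp (l * x)) x := by
    intro x _
    have := (Real.hasDerivAt_exp (l * x)).comp x ((hasDerivAt_id x).const_mul l)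
    simpa [mul_comm, Function.comp_def] using this
  have h2 : IntervalIntegrable (fun s => l * Real.exp (l * s)) volume a b :=
    Continuous.intervalIntegrable (by continuity) a b
  simpa using intervalIntegral.integral_eq_sub_of_hasDerivAt h1 h2

/-- Triangle Fubini, bounded version. -/
lemma tri_Ioc {Φ : ℝ → ℝ} {C : ℝ} (hm : Measurable Φ) (hb : ∀ s, |Φ s| ≤ C) {l t : ℝ}
    (hl : 0 < l) (ht : 0 < t) :
    ∫ s in Ioc (0:ℝ) t, (l * Real.exp (l * s)) * ∫ u in Ioc (0:ℝ) s, Φ u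
      = ∫ u in Ioc (0:ℝ) t, (Real.exp (l * t) - Real.exp (l * u)) * Φ u := by
  have hC : 0 ≤ C := le_trans (abs_nonneg _) (hb 0)
  set μ := volume.restrict (Ioc (0:ℝ) t) with hμ
  haveI hfin : IsFiniteMeasure μ := by
    constructor
    rw [hμ, Measure.restrict_apply_univ]
    exact measure_Ioc_lt_top
  set S : Set (ℝ × ℝ) := {p | 0 < p.2 ∧ p.2 ≤ p.1} with hS
  have hSm : MeasurableSet S :=
    (measurableSet_lt measurable_const measurable_snd).inter
      (measurableSet_le measurable_snd measurable_fst)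
  set G : ℝ × ℝ → ℝ := fun p => (l * Real.exp (l * p.1)) * Φ p.2 with hG
  have hGm : Measurable G :=
    ((measurable_const.mul ((Real.measurable_exp.comp (measurable_const.mul
      measurable_fst))))).mul (hm.comp measurable_snd)
  set F : ℝ × ℝ → ℝ := S.indicator G with hF
  have hFm : Measurable F := hGm.indicator hSm
  have ha : ∀ s, (fun u => F (s, u)) =
      (Ioc (0:ℝ) s).indicator (fun u => (l * Real.exp (l * s)) * Φ u) := by
    intro s; funext u
    simp only [hF, hS, Set.indicator_apply, Set.mem_setOf_eq, Set.mem_Ioc, hG]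
  have hbu : ∀ u, 0 < u → (fun s => F (s, u)) =
      (Ici u).indicator (fun s => (l * Real.exp (l * s)) * Φ u) := by
    intro u hu; funext s
    simp only [hF, hS, Set.indicator_apply, Set.mem_setOf_eq, Set.mem_Ici, hG]
    by_cases h : u ≤ s <;> simp [h, hu]
  have hint : Integrable F (μ.prod μ) := by
    refine Integrable.mono' (g := fun _ => l * Real.exp (l * t) * C)
      (integrable_const _) hFm.aestronglyMeasurable ?_
    have hprodeq : μ.prod μ = (volume.prod volume).restrict ((Ioc (0:ℝ) t) ×ˢ (Ioc (0:ℝ) t)) := by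
      rw [hμ, Measure.prod_restrict]
    rw [hprodeq]
    filter_upwards [ae_restrict_mem (measurableSet_Ioc.prod measurableSet_Ioc)] with p hp
    have h1 : ‖F p‖ ≤ ‖G p‖ := norm_indicator_le_norm_self _ _
    refine le_trans h1 ?_
    rw [Real.norm_eq_abs, hG]
    simp only
    rw [abs_mul]
    have h2 : |l * Real.exp (l * p.1)| = l * Real.exp (l * p.1) := abs_of_pos (by positivity)
    rw [h2]
    have h3 : Real.exp (l * p.1) ≤ Real.exp (l * t) :=
      Real.exp_le_exp.2 (mul_le_mul_of_nonneg_left hp.1.2 hl.le)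
    calc l * Real.exp (l * p.1) * |Φ p.2| ≤ l * Real.exp (l * t) * C := by
          apply mul_le_mul (by nlinarith) (hb p.2) (abs_nonneg _) (by positivity)
    _ = l * Real.exp (l * t) * C := rfl
  have swap := integral_integral_swap (f := fun s u => F (s, u)) (μ := μ) (ν := μ) hint
  calc ∫ s in Ioc (0:ℝ) t, (l * Real.exp (l * s)) * ∫ u in Ioc (0:ℝ) s, Φ u
      = ∫ s, (∫ u, F (s, u) ∂μ) ∂μ := by
        refine (setIntegral_congr_ae measurableSet_Ioc (ae_of_all _ fun s hs => ?_)).symm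
        rw [ha s, integral_indicator measurableSet_Ioc, hμ,
          Measure.restrict_restrict measurableSet_Ioc]
        have : Ioc (0:ℝ) s ∩ Ioc 0 t = Ioc 0 s :=
          inter_eq_left.2 (Ioc_subset_Ioc_right hs.2)
        rw [this, integral_const_mul]
  _ = ∫ u, (∫ s, F (s, u) ∂μ) ∂μ := swap
  _ = ∫ u in Ioc (0:ℝ) t, (Real.exp (l * t) - Real.exp (l * u)) * Φ u := by
        refine setIntegral_congr_ae measurableSet_Ioc (ae_of_all _ fun u hu => ?_)
        rw [hbu u hu.1, integral_indicator measurableSet_Ici, hμ,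
          Measure.restrict_restrict measurableSet_Ici]
        have hIcc : Ici u ∩ Ioc 0 t = Icc u t := by
          ext s
          simp only [mem_inter_iff, mem_Ici, mem_Ioc, mem_Icc]
          constructor
          · rintro ⟨h1, _, h3⟩; exact ⟨h1, h3⟩
          · rintro ⟨h1, h2⟩; exact ⟨h1, lt_of_lt_of_le hu.1 h1, h2⟩
        rw [hIcc, integral_mul_const, integral_Icc_eq_integral_Ioc,
          ← intervalIntegral.integral_of_le hu.2, interval_exp hl, mul_comm]

/-- Uniqueness of the Laplace transform for bounded measurable functions. -/
lemma laplace_unique {ψ : ℝ → ℝ} {C : ℝ} (hm : Measurable ψ) (hb : ∀ s, |ψ s| ≤ C)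
    (h : ∀ n : ℕ, ∫ s in Ioi (0:ℝ), Real.exp (-(((n:ℝ)+1) * s)) * ψ s = 0) :
    ∀ᵐ s ∂(volume.restrict (Ioi (0:ℝ))), ψ s = 0 := by
  have hC : 0 ≤ C := le_trans (abs_nonneg _) (hb 0)
  set f₀ : ℝ → ℝ := (Ioi (0:ℝ)).indicator ψ with hf₀
  have hf₀m : Measurable f₀ := hm.indicator measurableSet_Ioi
  have hf₀b : ∀ x, |f₀ x| ≤ C := by
    intro x
    rw [hf₀, Set.indicator_apply]
    split_ifs
    · exact hb x
    · simpa using hC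
  have hloc : LocallyIntegrable f₀ volume := by
    intro x
    exact ⟨Metric.closedBall x 1, Metric.closedBall_mem_nhds x one_pos,
      integrableOn_bdd_meas hf₀m hf₀b
        ((isCompact_closedBall x 1).measure_lt_top)⟩
  have hzero : ∀ g : ℝ → ℝ, ContDiff ℝ ((⊤ : ℕ∞) : WithTop ℕ∞) g → HasCompactSupport g →
      ∫ x, g x • f₀ x = 0 := by
    intro g hg hgsupp
    have hgc : Continuous g := hg.continuous
    -- reduce to the set integral over `Ioi 0`
    have hred : ∫ x, g x • f₀ x = ∫ s in Ioi (0:ℝ), g s * ψ s := by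
      have : ∀ x, g x • f₀ x = (Ioi (0:ℝ)).indicator (fun s => g s * ψ s) x := by
        intro x
        rw [hf₀]
        by_cases hx : x ∈ Ioi (0:ℝ) <;> simp [hx, Set.indicator_apply]
      simp_rw [this]
      exact integral_indicator measurableSet_Ioi
    rw [hred]
    -- choose A > 0 with g vanishing on [A, ∞)
    obtain ⟨A, hA0, hAsub⟩ :=
      (hgsupp.isBounded).subset_closedBall_lt 0 0
    have hgA : ∀ s, A < s → g s = 0 := by
      intro s hs
      apply image_eq_zero_of_notMem_tsupport
      intro hmem
      have := hAsub hmem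
      rw [Real.closedBall_eq_Icc] at this
      have := this.2
      simp at this
      linarith
    set δ : ℝ := Real.exp (-(A+1)) with hδ
    have hδpos : 0 < δ := Real.exp_pos _
    set φc : ℝ → ℝ := fun u => g (-(Real.log (max u δ))) / (max u δ) with hφc
    have hmaxpos : ∀ u : ℝ, 0 < max u δ := fun u => lt_of_lt_of_le hδpos (le_max_right _ _)
    have hφcont : Continuous φc := by
      have h1 : Continuous fun u : ℝ => max u δ := continuous_id.max continuous_const
      have h2 : Continuous fun u : ℝ => Real.log (max u δ) := by
        apply Real.continuousOn_log.comp_continuous h1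
        intro u
        exact Set.mem_compl_singleton_iff.2 (ne_of_gt (hmaxpos u))
      exact (hgc.comp h2.neg).div h1 fun u => ne_of_gt (hmaxpos u)
    have hkey : ∀ s : ℝ, 0 < s → g s = Real.exp (-s) * φc (Real.exp (-s)) := by
      intro s hs
      rcases le_or_gt δ (Real.exp (-s)) with hcase | hcase
      · have hmax : max (Real.exp (-s)) δ = Real.exp (-s) := max_eq_left hcase
        rw [hφc]
        simp only [hmax, Real.log_exp, neg_neg]
        field_simp
      · have hmax : max (Real.exp (-s)) δ = δ := max_eq_right hcase.le
        have hsA : A + 1 < s := by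
          have := Real.exp_lt_exp.1 hcase
          linarith
        have hg1 : g s = 0 := hgA s (by linarith)
        have hg2 : g (-(Real.log δ)) = 0 := by
          rw [hδ, Real.log_exp, neg_neg]
          exact hgA (A+1) (by linarith)
        rw [hφc]
        simp only [hmax, hg1, hg2, zero_div, mul_zero]
    -- the target integral
    set I : ℝ := ∫ s in Ioi (0:ℝ), g s * ψ s with hI
    -- integrability of g * ψ on Ioi 0
    have hgψint : IntegrableOn (fun s => g s * ψ s) (Ioi (0:ℝ)) := by
      have heq : EqOn ((Ioc (0:ℝ) A).indicator (fun s => g s * ψ s))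
          (fun s => g s * ψ s) (Ioi (0:ℝ)) := by
        intro s hs
        rw [Set.indicator_apply]
        split_ifs with hmem
        · rfl
        · have : A < s := by
            simp only [Set.mem_Ioc, not_and, not_le] at hmem
            exact hmem hs
          simp [hgA s this]
      refine IntegrableOn.congr_fun ?_ heq measurableSet_Ioi
      apply Integrable.integrableOn
      apply IntegrableOn.integrable_indicator _ measurableSet_Ioc
      obtain ⟨Mg0, hMg0⟩ :=
        (hgsupp : IsCompact (tsupport g)).exists_bound_of_continuousOn hgc.continuousOn
      have hMg : ∀ x, |g x| ≤ max Mg0 0 := by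
        intro x
        by_cases hx : x ∈ tsupport g
        · exact le_trans (by simpa [Real.norm_eq_abs] using hMg0 x hx) (le_max_left _ _)
        · rw [image_eq_zero_of_notMem_tsupport hx]
          simp
      refine integrableOn_bdd_meas (hgc.measurable.mul hm) (C := max Mg0 0 * C) (fun x => ?_)
        measure_Ioc_lt_top
      rw [Pi.mul_apply, abs_mul]
      exact mul_le_mul (hMg x) (hb x) (abs_nonneg _) (le_trans (abs_nonneg _) (hMg 0))
    -- show |I| ≤ ε * C for every ε > 0
    have hIle : ∀ ε : ℝ, 0 < ε → |I| ≤ ε * C := by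
      intro ε hε
      obtain ⟨q, hq⟩ := exists_polynomial_near_of_continuousOn 0 1 φc
        hφcont.continuousOn ε hε
      set P : ℝ → ℝ := fun s => Real.exp (-s) * Polynomial.eval (Real.exp (-s)) q * ψ s with hP
      -- expansion of P as a finite sum
      have hPexp : ∀ s : ℝ, P s = ∑ j ∈ Finset.range (q.natDegree + 1),
          q.coeff j * (Real.exp (-(((j:ℝ)+1) * s)) * ψ s) := by
        intro s
        rw [hP]
        simp only
        rw [Polynomial.eval_eq_sum_range, Finset.mul_sum, Finset.sum_mul]
        apply Finset.sum_congr rfl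
        intro j _
        have hexp : Real.exp (-s) * Real.exp (-s) ^ j = Real.exp (-(((j:ℝ)+1) * s)) := by
          rw [← Real.exp_nat_mul, ← Real.exp_add]
          ring_nf
        calc Real.exp (-s) * (q.coeff j * Real.exp (-s) ^ j) * ψ s
            = q.coeff j * ((Real.exp (-s) * Real.exp (-s) ^ j) * ψ s) := by ring
        _ = q.coeff j * (Real.exp (-(((j:ℝ)+1) * s)) * ψ s) := by rw [hexp]
      -- each summand integrable
      have hterm : ∀ j : ℕ, IntegrableOn
          (fun s => q.coeff j * (Real.exp (-(((j:ℝ)+1) * s)) * ψ s)) (Ioi (0:ℝ)) := by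
        intro j
        exact (integrable_exp_mul_bdd (by positivity) hm (fun s _ => hb s)).const_mul _
      have hPint : IntegrableOn P (Ioi (0:ℝ)) := by
        have : IntegrableOn (fun s => ∑ j ∈ Finset.range (q.natDegree + 1),
            q.coeff j * (Real.exp (-(((j:ℝ)+1) * s)) * ψ s)) (Ioi (0:ℝ)) :=
          MeasureTheory.integrable_finset_sum _ (fun j _ => hterm j)
        exact this.congr_fun (fun s _ => (hPexp s).symm) measurableSet_Ioi
      have hPzero : ∫ s in Ioi (0:ℝ), P s = 0 := by
        rw [setIntegral_congr_fun measurableSet_Ioi (fun s _ => hPexp s),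
          integral_finset_sum _ (fun j _ => hterm j)]
        apply Finset.sum_eq_zero
        intro j _
        rw [integral_const_mul, h j, mul_zero]
      have hdiff : |I| = |∫ s in Ioi (0:ℝ), (g s * ψ s - P s)| := by
        rw [integral_sub hgψint hPint, hPzero, sub_zero]
      rw [hdiff]
      have hbnd : ∀ s ∈ Ioi (0:ℝ), |g s * ψ s - P s| ≤ (ε * C) * Real.exp (-s) := by
        intro s hs
        have hs' : (0:ℝ) < s := hs
        have hu1 : Real.exp (-s) ∈ Icc (0:ℝ) 1 :=
          ⟨(Real.exp_pos _).le, Real.exp_le_one_iff.2 (by linarith)⟩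
        have happrox := hq (Real.exp (-s)) hu1
        calc |g s * ψ s - P s|
            = |(g s - Real.exp (-s) * Polynomial.eval (Real.exp (-s)) q) * ψ s| := by
              rw [hP]; ring_nf
        _ = |g s - Real.exp (-s) * Polynomial.eval (Real.exp (-s)) q| * |ψ s| := abs_mul _ _
        _ = (Real.exp (-s) * |φc (Real.exp (-s)) - Polynomial.eval (Real.exp (-s)) q|) * |ψ s| := by
              rw [hkey s hs', ← mul_sub, abs_mul, abs_of_pos (Real.exp_pos _)]
        _ ≤ (Real.exp (-s) * ε) * C := by
              apply mul_le_mul _ (hb s) (abs_nonneg _) (by positivity)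
              apply mul_le_mul_of_nonneg_left _ (Real.exp_pos (-s)).le
              rw [abs_sub_comm]
              exact (happrox).le
        _ = (ε * C) * Real.exp (-s) := by ring
      calc |∫ s in Ioi (0:ℝ), (g s * ψ s - P s)|
          ≤ ∫ s in Ioi (0:ℝ), (ε * C) * Real.exp (-s) := by
            rw [← Real.norm_eq_abs]
            refine norm_integral_le_of_norm_le ?_ ?_
            · have : IntegrableOn (fun s : ℝ => Real.exp (-s)) (Ioi (0:ℝ)) := by
                simpa using integrableOn_exp_neg one_pos 0
              exact this.const_mul _
            · filter_upwards [ae_restrict_mem measurableSet_Ioi] with s hs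
              simpa [Real.norm_eq_abs] using hbnd s hs
      _ = (ε * C) * ∫ s in Ioi (0:ℝ), Real.exp (-s) := integral_const_mul _ _
      _ = ε * C := by rw [integral_exp_neg_Ioi_zero, mul_one]
    -- conclude I = 0
    by_contra hne
    have habs : 0 < |I| := abs_pos.2 hne
    have hC1 : 0 < C + 1 := by linarith
    have hεpos : 0 < |I| / (2 * (C + 1)) := by positivity
    have hle := hIle _ hεpos
    have : |I| / (2 * (C + 1)) * C < |I| := by
      rw [div_mul_eq_mul_div, div_lt_iff₀ (by positivity)]
      nlinarith
    linarith
  have hae := ae_eq_zero_of_integral_contDiff_smul_eq_zero hloc hzero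
  filter_upwards [ae_restrict_of_ae hae, ae_restrict_mem measurableSet_Ioi] with s h1 h2
  rw [← Set.indicator_of_mem h2 ψ]
  exact h1

section Kernel

variable {X : Type*} [MeasurableSpace X] {k : ℝ → X → Measure X}

lemma TOp_abs_le (hprob : ∀ t, 0 ≤ t → ∀ x, IsProbabilityMeasure (k t x))
    {f : X → ℝ} {C : ℝ} (hb : ∀ x, |f x| ≤ C) {t : ℝ} (ht : 0 ≤ t) (x : X) :
    |TOp k t f x| ≤ C := by
  haveI := hprob t ht x
  rw [← Real.norm_eq_abs]
  calc ‖∫ y, f y ∂(k t x)‖ ≤ C * ((k t x) univ).toReal :=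
    norm_integral_le_of_norm_le_const (ae_of_all _ fun y => by
      simpa [Real.norm_eq_abs] using hb y)
  _ = C := by simp

lemma TOp_meas
    (hjm : ∀ f : X → ℝ, (∃ C, ∀ x, |f x| ≤ C) → Measurable f →
      Measurable fun p : ℝ × X => TOp k p.1 f p.2)
    {f : X → ℝ} (hbf : ∃ C, ∀ x, |f x| ≤ C) (hmf : Measurable f) (t : ℝ) :
    Measurable fun x => TOp k t f x :=
  (hjm f hbf hmf).comp (measurable_const.prodMk measurable_id)

lemma TOp_meas_t
    (hjm : ∀ f : X → ℝ, (∃ C, ∀ x, |f x| ≤ C) → Measurable f →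
      Measurable fun p : ℝ × X => TOp k p.1 f p.2)
    {f : X → ℝ} (hbf : ∃ C, ∀ x, |f x| ≤ C) (hmf : Measurable f) (x : X) :
    Measurable fun s => TOp k s f x :=
  (hjm f hbf hmf).comp (measurable_id.prodMk measurable_const)

/-- The resolvent of the semigroup. -/
noncomputable def Res (k : ℝ → X → Measure X) (l : ℝ) (h : X → ℝ) (x : X) : ℝ :=
  ∫ s in Ioi (0:ℝ), Real.exp (-(l * s)) * TOp k s h x

lemma Res_integrand_integrable
    (hprob : ∀ t, 0 ≤ t → ∀ x, IsProbabilityMeasure (k t x))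
    (hjm : ∀ f : X → ℝ, (∃ C, ∀ x, |f x| ≤ C) → Measurable f →
      Measurable fun p : ℝ × X => TOp k p.1 f p.2)
    {l : ℝ} (hl : 0 < l) {h : X → ℝ} {C : ℝ} (hb : ∀ x, |h x| ≤ C) (hmh : Measurable h)
    (x : X) {r : ℝ} (hr : 0 ≤ r) :
    IntegrableOn (fun s => Real.exp (-(l * s)) * TOp k s h x) (Ioi r) := by
  refine integrable_exp_mul_bdd (C := C) hl (TOp_meas_t hjm ⟨C, hb⟩ hmh x) (fun s hs => ?_)
  exact TOp_abs_le hprob hb (le_of_lt (lt_of_le_of_lt hr hs)) x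

lemma Res_abs_le
    (hprob : ∀ t, 0 ≤ t → ∀ x, IsProbabilityMeasure (k t x))
    (hjm : ∀ f : X → ℝ, (∃ C, ∀ x, |f x| ≤ C) → Measurable f →
      Measurable fun p : ℝ × X => TOp k p.1 f p.2)
    {l : ℝ} (hl : 0 < l) {h : X → ℝ} {C : ℝ} (hb : ∀ x, |h x| ≤ C) (hmh : Measurable h)
    (x : X) : |Res k l h x| ≤ C / l := by
  have hC : 0 ≤ C := le_trans (abs_nonneg _) (hb x)
  have hint : IntegrableOn (fun s => Real.exp (-(l * s)) * C) (Ioi (0:ℝ)) :=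
    (integrableOn_exp_neg hl 0).mul_const C
  rw [← Real.norm_eq_abs]
  calc ‖Res k l h x‖ ≤ ∫ s in Ioi (0:ℝ), Real.exp (-(l * s)) * C := by
        refine norm_integral_le_of_norm_le hint ?_
        filter_upwards [ae_restrict_mem measurableSet_Ioi] with s hs
        rw [Real.norm_eq_abs, abs_mul, abs_of_pos (Real.exp_pos _)]
        exact mul_le_mul_of_nonneg_left (TOp_abs_le hprob hb (le_of_lt hs) x)
          (Real.exp_pos _).le
  _ = C / l := by
        have h1 := integral_l_exp_neg hl 0
        rw [integral_const_mul] at h1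
        have h2 : ∫ s in Ioi (0:ℝ), Real.exp (-(l * s)) = 1 / l := by
          rw [eq_div_iff (ne_of_gt hl)]
          simpa [mul_comm] using h1
        rw [integral_mul_const, h2]
        ring

lemma Res_meas
    (hjm : ∀ f : X → ℝ, (∃ C, ∀ x, |f x| ≤ C) → Measurable f →
      Measurable fun p : ℝ × X => TOp k p.1 f p.2)
    {l : ℝ} {h : X → ℝ} (hbh : ∃ C, ∀ x, |h x| ≤ C) (hmh : Measurable h) :
    Measurable (Res k l h) := by
  have hF : Measurable fun p : X × ℝ => Real.exp (-(l * p.2)) * TOp k p.2 h p.1 := by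
    refine Measurable.mul ?_ ?_
    · exact Real.measurable_exp.comp ((measurable_const.mul measurable_snd).neg)
    · exact (hjm h hbh hmh).comp (measurable_snd.prodMk measurable_fst)
  exact (hF.stronglyMeasurable.integral_prod_right'
    (ν := volume.restrict (Ioi (0:ℝ)))).measurable

end Kernel

lemma integrableOn_bdd_meas' {f : ℝ → ℝ} {C : ℝ} (hm : Measurable f) {s : Set ℝ}
    (hsm : MeasurableSet s) (hb : ∀ x ∈ s, |f x| ≤ C) (hs : volume s < ∞) :
    IntegrableOn f s volume := by
  refine Integrable.mono' (g := fun _ => C) (integrableOn_const hs.ne)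
    hm.aestronglyMeasurable ?_
  filter_upwards [ae_restrict_mem hsm] with x hx
  simpa [Real.norm_eq_abs] using hb x hx

lemma primitive_cont {Φ : ℝ → ℝ} {C : ℝ} (hm : Measurable Φ) (hb : ∀ u, |Φ u| ≤ C) :
    Continuous fun s => ∫ u in (0:ℝ)..s, Φ u := by
  apply intervalIntegral.continuous_primitive
  intro a b
  rw [intervalIntegrable_iff]
  refine integrableOn_bdd_meas' hm measurableSet_uIoc (fun x _ => hb x) ?_
  rw [Set.uIoc]
  exact measure_Ioc_lt_top

lemma primitive_eq {Φ : ℝ → ℝ} {s : ℝ} (hs : 0 ≤ s) :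
    ∫ u in Ioc (0:ℝ) s, Φ u = ∫ u in (0:ℝ)..s, Φ u :=
  (intervalIntegral.integral_of_le hs).symm

lemma primitive_bound {Φ : ℝ → ℝ} {C : ℝ} (hb : ∀ u, |Φ u| ≤ C) {s : ℝ} (hs : 0 ≤ s) :
    |∫ u in Ioc (0:ℝ) s, Φ u| ≤ C * s := by
  haveI : IsFiniteMeasure (volume.restrict (Ioc (0:ℝ) s)) := by
    constructor
    rw [Measure.restrict_apply_univ]
    exact measure_Ioc_lt_top
  rw [← Real.norm_eq_abs]
  calc ‖∫ u in Ioc (0:ℝ) s, Φ u‖ ≤ C * ((volume.restrict (Ioc (0:ℝ) s)) univ).toReal :=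
    norm_integral_le_of_norm_le_const (ae_of_all _ fun u => by
      simpa [Real.norm_eq_abs] using hb u)
  _ = C * s := by
    rw [Measure.restrict_apply_univ, Real.volume_Ioc]
    simp [ENNReal.toReal_ofReal hs]

section Kernel2

variable {X : Type*} [MeasurableSpace X] {k : ℝ → X → Measure X}

lemma TOp_lin (hprob : ∀ t, 0 ≤ t → ∀ x, IsProbabilityMeasure (k t x))
    {u v : X → ℝ} {Cu Cv : ℝ} (hbu : ∀ y, |u y| ≤ Cu) (hmu : Measurable u)
    (hbv : ∀ y, |v y| ≤ Cv) (hmv : Measurable v) (l : ℝ) {s : ℝ} (hs : 0 ≤ s) (x : X) :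
    TOp k s (fun y => l * u y - v y) x = l * TOp k s u x - TOp k s v x := by
  haveI := hprob s hs x
  show ∫ y, (l * u y - v y) ∂(k s x) = l * (∫ y, u y ∂(k s x)) - ∫ y, v y ∂(k s x)
  rw [integral_sub ((integrable_of_bdd hmu hbu).const_mul l) (integrable_of_bdd hmv hbv),
    integral_const_mul]

lemma TOp_Res (hprob : ∀ t, 0 ≤ t → ∀ x, IsProbabilityMeasure (k t x))
    (hjm : ∀ f : X → ℝ, (∃ C, ∀ x, |f x| ≤ C) → Measurable f →
      Measurable fun p : ℝ × X => TOp k p.1 f p.2)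
    (hsg : ∀ t s, 0 ≤ t → 0 ≤ s → ∀ f : X → ℝ, (∃ C, ∀ x, |f x| ≤ C) → Measurable f →
      ∀ x, TOp k t (TOp k s f) x = TOp k (t + s) f x)
    {l C : ℝ} (hl : 0 < l) {h : X → ℝ} (hb : ∀ x, |h x| ≤ C) (hmh : Measurable h)
    {t : ℝ} (ht : 0 ≤ t) (x : X) :
    TOp k t (Res k l h) x
      = Real.exp (l * t) * ∫ u in Ioi t, Real.exp (-(l * u)) * TOp k u h x := by
  haveI := hprob t ht x
  set ν := volume.restrict (Ioi (0:ℝ)) with hν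
  have hGm : Measurable fun p : X × ℝ => Real.exp (-(l * p.2)) * TOp k p.2 h p.1 := by
    refine Measurable.mul ?_ ?_
    · exact Real.measurable_exp.comp ((measurable_const.mul measurable_snd).neg)
    · exact (hjm h ⟨C, hb⟩ hmh).comp (measurable_snd.prodMk measurable_fst)
  have hae2 : ∀ᵐ p ∂((k t x).prod ν), p.2 ∈ Ioi (0:ℝ) := by
    have hset : {p : X × ℝ | ¬ p.2 ∈ Ioi (0:ℝ)} = univ ×ˢ (Ioi (0:ℝ))ᶜ := by
      ext p; simp
    rw [ae_iff, hset, Measure.prod_prod]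
    have : ν (Ioi (0:ℝ))ᶜ = 0 := by
      rw [hν, Measure.restrict_apply measurableSet_Ioi.compl]
      simp [Set.compl_Ioi, Set.Iic_inter_Ioi]
    rw [this, mul_zero]
  have hint : Integrable (fun p : X × ℝ => Real.exp (-(l * p.2)) * TOp k p.2 h p.1)
      ((k t x).prod ν) := by
    refine Integrable.mono' (g := fun p : X × ℝ => C * Real.exp (-(l * p.2)))
      ((integrable_const C).mul_prod (integrableOn_exp_neg hl 0)) hGm.aestronglyMeasurable ?_
    filter_upwards [hae2] with p hp
    rw [Real.norm_eq_abs, abs_mul, abs_of_pos (Real.exp_pos _)]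
    calc Real.exp (-(l * p.2)) * |TOp k p.2 h p.1| ≤ Real.exp (-(l * p.2)) * C :=
        mul_le_mul_of_nonneg_left (TOp_abs_le hprob hb (le_of_lt hp) p.1) (Real.exp_pos _).le
    _ = C * Real.exp (-(l * p.2)) := mul_comm _ _
  have hswap := integral_integral_swap
    (f := fun (y : X) (s : ℝ) => Real.exp (-(l * s)) * TOp k s h y) (μ := k t x) (ν := ν) hint
  have step1 : TOp k t (Res k l h) x
      = ∫ s in Ioi (0:ℝ), Real.exp (-(l * s)) * TOp k (t + s) h x := by
    calc TOp k t (Res k l h) x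
        = ∫ y, (∫ s in Ioi (0:ℝ), Real.exp (-(l * s)) * TOp k s h y) ∂(k t x) := rfl
    _ = ∫ s in Ioi (0:ℝ), ∫ y, Real.exp (-(l * s)) * TOp k s h y ∂(k t x) := hswap
    _ = ∫ s in Ioi (0:ℝ), Real.exp (-(l * s)) * TOp k (t + s) h x := by
        refine setIntegral_congr_fun measurableSet_Ioi fun s hs => ?_
        rw [integral_const_mul]
        have := hsg t s ht (le_of_lt hs) h ⟨C, hb⟩ hmh x
        rw [show (∫ y, TOp k s h y ∂(k t x)) = TOp k t (TOp k s h) x from rfl, this]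
  rw [step1]
  -- change of variables u = s + t
  have hemb : MeasurableEmbedding (fun s : ℝ => s + t) :=
    (MeasurableEquiv.addRight t).measurableEmbedding
  have hmp : MeasurePreserving (fun s : ℝ => s + t) volume volume :=
    measurePreserving_add_right volume t
  have himg := hmp.setIntegral_image_emb hemb
    (fun u => Real.exp (-(l * u)) * TOp k u h x) (Ioi (0:ℝ))
  rw [image_add_const_Ioi, zero_add] at himg
  rw [himg, ← integral_const_mul]
  refine setIntegral_congr_fun measurableSet_Ioi fun s _ => ?_
  have hexp : Real.exp (l * t) * Real.exp (-(l * (s + t))) = Real.exp (-(l * s)) := by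
    rw [← Real.exp_add]; ring_nf
  rw [add_comm t s, ← mul_assoc, hexp]

end Kernel2

section Kernel3

variable {X : Type*} [MeasurableSpace X] {k : ℝ → X → Measure X}

theorem Res_inFullGen
    (hprob : ∀ t, 0 ≤ t → ∀ x, IsProbabilityMeasure (k t x))
    (hjm : ∀ f : X → ℝ, (∃ C, ∀ x, |f x| ≤ C) → Measurable f →
      Measurable fun p : ℝ × X => TOp k p.1 f p.2)
    (hsg : ∀ t s, 0 ≤ t → 0 ≤ s → ∀ f : X → ℝ, (∃ C, ∀ x, |f x| ≤ C) → Measurable f →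
      ∀ x, TOp k t (TOp k s f) x = TOp k (t + s) f x)
    {l C : ℝ} (hl : 0 < l) {h : X → ℝ} (hb : ∀ x, |h x| ≤ C) (hmh : Measurable h) :
    InFullGen k (Res k l h) (fun y => l * Res k l h y - h y) := by
  refine ⟨⟨C / l, fun y => Res_abs_le hprob hjm hl hb hmh y⟩, Res_meas hjm ⟨C, hb⟩ hmh,
    ⟨l * (C / l) + C, fun y => ?_⟩,
    (measurable_const.mul (Res_meas hjm ⟨C, hb⟩ hmh)).sub hmh, ?_⟩
  · calc |l * Res k l h y - h y| ≤ |l * Res k l h y| + |h y| := abs_sub _ _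
    _ ≤ l * (C / l) + C := by
        apply add_le_add _ (hb y)
        rw [abs_mul, abs_of_pos hl]
        exact mul_le_mul_of_nonneg_left (Res_abs_le hprob hjm hl hb hmh y) hl.le
  · intro t ht x
    have hC : 0 ≤ C := le_trans (abs_nonneg _) (hb x)
    set φ : ℝ → ℝ := fun u => TOp k u h x with hφ
    set Φ' : ℝ → ℝ := fun u => if 0 < u then Real.exp (-(l * u)) * φ u else 0 with hΦ'
    have hφm : Measurable φ := TOp_meas_t hjm ⟨C, hb⟩ hmh x
    have hΦ'm : Measurable Φ' := Measurable.ite measurableSet_Ioi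
      ((Real.measurable_exp.comp ((measurable_const.mul measurable_id).neg)).mul hφm)
      measurable_const
    have hΦ'b : ∀ u, |Φ' u| ≤ C := by
      intro u
      rw [hΦ']
      simp only
      split_ifs with hu
      · rw [abs_mul, abs_of_pos (Real.exp_pos _)]
        have h1 : Real.exp (-(l * u)) ≤ 1 := Real.exp_le_one_iff.2 (by nlinarith)
        calc Real.exp (-(l * u)) * |φ u| ≤ 1 * C :=
          mul_le_mul h1 (TOp_abs_le hprob hb hu.le x) (abs_nonneg _) zero_le_one
        _ = C := one_mul C
      · simpa using hC
    have hΦeq : ∀ s : ℝ, ∫ u in Ioc (0:ℝ) s, Real.exp (-(l * u)) * φ u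
        = ∫ u in Ioc (0:ℝ) s, Φ' u :=
      fun s => setIntegral_congr_fun measurableSet_Ioc fun u hu => by
        rw [hΦ']; simp only [if_pos hu.1]
    set J : ℝ → ℝ := fun s => ∫ u in Ioc (0:ℝ) s, Φ' u with hJ
    set R0 : ℝ := Res k l h x with hR0
    have hIOn : ∀ r : ℝ, 0 ≤ r → IntegrableOn (fun u => Real.exp (-(l * u)) * φ u) (Ioi r) :=
      fun r hr => Res_integrand_integrable hprob hjm hl hb hmh x hr
    have hsplit : ∀ s : ℝ, 0 ≤ s →
        ∫ u in Ioi s, Real.exp (-(l * u)) * φ u = R0 - J s := by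
      intro s hs
      have hunion : Ioc (0:ℝ) s ∪ Ioi s = Ioi 0 := Ioc_union_Ioi_eq_Ioi hs
      have hadd := setIntegral_union (Ioc_disjoint_Ioi_same) measurableSet_Ioi
        ((hIOn 0 le_rfl).mono_set Ioc_subset_Ioi_self) (hIOn s hs)
        (f := fun u => Real.exp (-(l * u)) * φ u)
      rw [hunion] at hadd
      have hres : R0 = ∫ u in Ioi (0:ℝ), Real.exp (-(l * u)) * φ u := rfl
      rw [hres, hadd, hΦeq s]
      have : J s = ∫ u in Ioc (0:ℝ) s, Φ' u := rfl
      rw [← this]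
      ring
    have hA : ∀ r : ℝ, 0 ≤ r → TOp k r (Res k l h) x = Real.exp (l * r) * (R0 - J r) := by
      intro r hr
      rw [TOp_Res hprob hjm hsg hl hb hmh hr x, hsplit r hr]
    have hRHS1 : ∫ s in Ioc (0:ℝ) t, TOp k s (fun y => l * Res k l h y - h y) x
        = ∫ s in Ioc (0:ℝ) t,
            ((l * Real.exp (l * s)) * R0 - (l * Real.exp (l * s)) * J s - φ s) := by
      refine setIntegral_congr_fun measurableSet_Ioc fun s hs => ?_
      rw [TOp_lin hprob (fun y => Res_abs_le hprob hjm hl hb hmh y)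
        (Res_meas hjm ⟨C, hb⟩ hmh) hb hmh l hs.1.le x, hA s hs.1.le]
      show l * (Real.exp (l * s) * (R0 - J s)) - φ s = _
      ring
    have hcexp : Continuous fun s : ℝ => l * Real.exp (l * s) :=
      continuous_const.mul (Real.continuous_exp.comp (continuous_const.mul continuous_id))
    have hint1 : IntegrableOn (fun s => (l * Real.exp (l * s)) * R0) (Ioc (0:ℝ) t) :=
      Continuous.integrableOn_Ioc (hcexp.mul continuous_const)
    have hJcont := primitive_cont hΦ'm hΦ'b
    have hJeq : ∀ s : ℝ, 0 ≤ s → (∫ u in (0:ℝ)..s, Φ' u) = J s :=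
      fun s hs => (primitive_eq hs).symm
    have hint2 : IntegrableOn (fun s => (l * Real.exp (l * s)) * J s) (Ioc (0:ℝ) t) := by
      have hc : Continuous fun s => (l * Real.exp (l * s)) * ∫ u in (0:ℝ)..s, Φ' u :=
        Continuous.mul hcexp hJcont
      refine (hc.integrableOn_Ioc).congr_fun (fun s hs => ?_) measurableSet_Ioc
      show (l * Real.exp (l * s)) * (∫ u in (0:ℝ)..s, Φ' u) = (l * Real.exp (l * s)) * J s
      rw [hJeq s hs.1.le]
    have hint3 : IntegrableOn φ (Ioc (0:ℝ) t) :=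
      integrableOn_bdd_meas' hφm measurableSet_Ioc
        (fun s hs => TOp_abs_le hprob hb hs.1.le x) measure_Ioc_lt_top
    have hpiece1 : ∫ s in Ioc (0:ℝ) t, (l * Real.exp (l * s)) * R0
        = (Real.exp (l * t) - 1) * R0 := by
      rw [integral_mul_const, primitive_eq ht.le, interval_exp hl]
      rw [mul_zero, Real.exp_zero]
    have hpiece2 : ∫ s in Ioc (0:ℝ) t, (l * Real.exp (l * s)) * J s
        = Real.exp (l * t) * J t - ∫ s in Ioc (0:ℝ) t, φ s := by
      have htri := tri_Ioc hΦ'm hΦ'b hl ht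
      calc ∫ s in Ioc (0:ℝ) t, (l * Real.exp (l * s)) * J s
          = ∫ s in Ioc (0:ℝ) t, (l * Real.exp (l * s)) * ∫ u in Ioc (0:ℝ) s, Φ' u := rfl
      _ = ∫ u in Ioc (0:ℝ) t, (Real.exp (l * t) - Real.exp (l * u)) * Φ' u := htri
      _ = ∫ u in Ioc (0:ℝ) t, (Real.exp (l * t) * Φ' u - Real.exp (l * u) * Φ' u) := by
          refine setIntegral_congr_fun measurableSet_Ioc fun u _ => ?_
          ring
      _ = Real.exp (l * t) * J t - ∫ s in Ioc (0:ℝ) t, φ s := by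
          have hi1 : IntegrableOn (fun u => Real.exp (l * t) * Φ' u) (Ioc (0:ℝ) t) :=
            integrableOn_bdd_meas' (measurable_const.mul hΦ'm) measurableSet_Ioc
              (C := Real.exp (l * t) * C) (fun u _ => by
                show |Real.exp (l * t) * Φ' u| ≤ Real.exp (l * t) * C
                rw [abs_mul, abs_of_pos (Real.exp_pos _)]
                exact mul_le_mul_of_nonneg_left (hΦ'b u) (Real.exp_pos _).le)
              measure_Ioc_lt_top
          have hi2 : IntegrableOn (fun u => Real.exp (l * u) * Φ' u) (Ioc (0:ℝ) t) :=
            integrableOn_bdd_meas'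
              ((Real.measurable_exp.comp (measurable_const.mul measurable_id)).mul hΦ'm)
              measurableSet_Ioc (C := Real.exp (l * t) * C) (fun u hu => by
                show |Real.exp (l * u) * Φ' u| ≤ Real.exp (l * t) * C
                rw [abs_mul, abs_of_pos (Real.exp_pos _)]
                refine mul_le_mul (Real.exp_le_exp.2 (by nlinarith [hu.2])) (hΦ'b u)
                  (abs_nonneg _) (Real.exp_pos _).le)
              measure_Ioc_lt_top
          rw [integral_sub hi1 hi2, integral_const_mul]
          congr 1
          refine setIntegral_congr_fun measurableSet_Ioc fun u hu => ?_
          rw [hΦ']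
          simp only [if_pos hu.1]
          rw [← mul_assoc, ← Real.exp_add]
          simp
    rw [hA t ht.le, hRHS1]
    have e1 := integral_sub (hint1.sub hint2) hint3
    have e2 := integral_sub hint1 hint2
    simp only [Pi.sub_apply] at e1 e2
    rw [e1, e2, hpiece1, hpiece2]
    ring

end Kernel3

section Kernel4

variable {X : Type*} [MeasurableSpace X]

theorem laplace_gen {k : ℝ → X → Measure X}
    (hprob : ∀ t, 0 ≤ t → ∀ x, IsProbabilityMeasure (k t x))
    (hjm : ∀ f : X → ℝ, (∃ C, ∀ x, |f x| ≤ C) → Measurable f →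
      Measurable fun p : ℝ × X => TOp k p.1 f p.2)
    {f g : X → ℝ} (hfg : InFullGen k f g) {l : ℝ} (hl : 0 < l) (x : X) :
    l * Res k l f x = f x + Res k l g x := by
  obtain ⟨⟨Cf, hCf⟩, hmf, ⟨Cg, hCg⟩, hmg, hrel⟩ := hfg
  have hCg0 : 0 ≤ Cg := le_trans (abs_nonneg _) (hCg x)
  set γ' : ℝ → ℝ := fun u => if 0 < u then TOp k u g x else 0 with hγ'
  have hγ'm : Measurable γ' := Measurable.ite measurableSet_Ioi
    (TOp_meas_t hjm ⟨Cg, hCg⟩ hmg x) measurable_const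
  have hγ'b : ∀ u, |γ' u| ≤ Cg := by
    intro u
    rw [hγ']
    simp only
    split_ifs with hu
    · exact TOp_abs_le hprob hCg hu.le x
    · simpa using hCg0
  have hJg : ∀ s : ℝ, 0 < s → TOp k s f x = f x + ∫ u in Ioc (0:ℝ) s, γ' u := by
    intro s hs
    have h1 := hrel s hs x
    have h2 : ∫ u in Ioc (0:ℝ) s, TOp k u g x = ∫ u in Ioc (0:ℝ) s, γ' u :=
      setIntegral_congr_fun measurableSet_Ioc fun u hu => by
        rw [hγ']; simp only [if_pos hu.1]
    rw [h2] at h1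
    linarith
  have hResf : Res k l f x = ∫ s in Ioi (0:ℝ),
      (Real.exp (-(l * s)) * f x + Real.exp (-(l * s)) * ∫ u in Ioc (0:ℝ) s, γ' u) := by
    refine setIntegral_congr_fun measurableSet_Ioi fun s hs => ?_
    show Real.exp (-(l * s)) * TOp k s f x = _
    rw [hJg s hs]
    ring
  have hint1 : IntegrableOn (fun s => Real.exp (-(l * s)) * f x) (Ioi (0:ℝ)) :=
    (integrableOn_exp_neg hl 0).mul_const _
  have hint2 : IntegrableOn
      (fun s => Real.exp (-(l * s)) * ∫ u in Ioc (0:ℝ) s, γ' u) (Ioi (0:ℝ)) := by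
    refine Integrable.mono' (g := fun s => (Cg * (2 / l)) * Real.exp (-(l / 2 * s)))
      ((integrableOn_exp_neg (by positivity) 0).const_mul _) ?_ ?_
    · have hcont : Continuous fun s => Real.exp (-(l * s)) * ∫ u in (0:ℝ)..s, γ' u :=
        (Real.continuous_exp.comp (continuous_const.mul continuous_id).neg).mul
          (primitive_cont hγ'm hγ'b)
      refine hcont.aestronglyMeasurable.congr ?_
      filter_upwards [ae_restrict_mem measurableSet_Ioi] with s hs
      rw [primitive_eq (le_of_lt hs)]
    · filter_upwards [ae_restrict_mem measurableSet_Ioi] with s hs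
      rw [Real.norm_eq_abs, abs_mul, abs_of_pos (Real.exp_pos _)]
      calc Real.exp (-(l * s)) * |∫ u in Ioc (0:ℝ) s, γ' u|
          ≤ Real.exp (-(l * s)) * (Cg * s) :=
            mul_le_mul_of_nonneg_left (primitive_bound hγ'b (le_of_lt hs)) (Real.exp_pos _).le
      _ = Cg * (s * Real.exp (-(l * s))) := by ring
      _ ≤ Cg * ((2 / l) * Real.exp (-(l / 2 * s))) :=
            mul_le_mul_of_nonneg_left (mul_exp_le hl (le_of_lt hs)) hCg0
      _ = (Cg * (2 / l)) * Real.exp (-(l / 2 * s)) := by ring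
  have hexpint : ∫ s in Ioi (0:ℝ), Real.exp (-(l * s)) = 1 / l := by
    have h1 := integral_l_exp_neg hl 0
    rw [integral_const_mul] at h1
    rw [eq_div_iff (ne_of_gt hl)]
    simpa [mul_comm] using h1
  have hp1 : ∫ s in Ioi (0:ℝ), Real.exp (-(l * s)) * f x = f x / l := by
    rw [integral_mul_const, hexpint]
    ring
  have hp2 : l * ∫ s in Ioi (0:ℝ), Real.exp (-(l * s)) * ∫ u in Ioc (0:ℝ) s, γ' u
      = Res k l g x := by
    have htri := tri_Ioi hγ'm hγ'b hl
    rw [← integral_const_mul]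
    have hassoc : ∫ s in Ioi (0:ℝ), l * (Real.exp (-(l * s)) * ∫ u in Ioc (0:ℝ) s, γ' u)
        = ∫ s in Ioi (0:ℝ), (l * Real.exp (-(l * s))) * ∫ u in Ioc (0:ℝ) s, γ' u := by
      refine setIntegral_congr_fun measurableSet_Ioi fun s _ => ?_
      ring
    rw [hassoc, htri]
    refine setIntegral_congr_fun measurableSet_Ioi fun u hu => ?_
    show Real.exp (-(l * u)) * γ' u = Real.exp (-(l * u)) * TOp k u g x
    have hu' : (0:ℝ) < u := hu
    rw [hγ']
    simp only [hu', if_true]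
  rw [hResf, integral_add hint1 hint2, mul_add, hp1, hp2]
  field_simp

theorem Res_eq {k₁ k₂ : ℝ → X → Measure X}
    (hprob₁ : ∀ t, 0 ≤ t → ∀ x, IsProbabilityMeasure (k₁ t x))
    (hprob₂ : ∀ t, 0 ≤ t → ∀ x, IsProbabilityMeasure (k₂ t x))
    (hjm₁ : ∀ f : X → ℝ, (∃ C, ∀ x, |f x| ≤ C) → Measurable f →
      Measurable fun p : ℝ × X => TOp k₁ p.1 f p.2)
    (hjm₂ : ∀ f : X → ℝ, (∃ C, ∀ x, |f x| ≤ C) → Measurable f →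
      Measurable fun p : ℝ × X => TOp k₂ p.1 f p.2)
    (hsg₁ : ∀ t s, 0 ≤ t → 0 ≤ s → ∀ f : X → ℝ, (∃ C, ∀ x, |f x| ≤ C) → Measurable f →
      ∀ x, TOp k₁ t (TOp k₁ s f) x = TOp k₁ (t + s) f x)
    (hgeneq : ∀ f g : X → ℝ, InFullGen k₁ f g ↔ InFullGen k₂ f g)
    {l C : ℝ} (hl : 0 < l) {h : X → ℝ} (hb : ∀ x, |h x| ≤ C) (hmh : Measurable h)
    (x : X) : Res k₁ l h x = Res k₂ l h x := by
  have h1 := Res_inFullGen hprob₁ hjm₁ hsg₁ hl hb hmh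
  have h2 := (hgeneq _ _).1 h1
  have h3 := laplace_gen hprob₂ hjm₂ h2 hl x
  have hbR : ∀ y, |Res k₁ l h y| ≤ C / l := fun y => Res_abs_le hprob₁ hjm₁ hl hb hmh y
  have hmR : Measurable (Res k₁ l h) := Res_meas hjm₁ ⟨C, hb⟩ hmh
  have h4 : Res k₂ l (fun y => l * Res k₁ l h y - h y) x
      = l * Res k₂ l (Res k₁ l h) x - Res k₂ l h x := by
    have hcongr : Res k₂ l (fun y => l * Res k₁ l h y - h y) x
        = ∫ s in Ioi (0:ℝ), (l * (Real.exp (-(l * s)) * TOp k₂ s (Res k₁ l h) x)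
            - Real.exp (-(l * s)) * TOp k₂ s h x) := by
      refine setIntegral_congr_fun measurableSet_Ioi fun s hs => ?_
      show Real.exp (-(l * s)) * TOp k₂ s (fun y => l * Res k₁ l h y - h y) x = _
      rw [TOp_lin hprob₂ hbR hmR hb hmh l (le_of_lt hs) x]
      ring
    have hi1 : IntegrableOn
        (fun s => l * (Real.exp (-(l * s)) * TOp k₂ s (Res k₁ l h) x)) (Ioi (0:ℝ)) :=
      (Res_integrand_integrable hprob₂ hjm₂ hl hbR hmR x le_rfl).const_mul l
    have hi2 : IntegrableOn (fun s => Real.exp (-(l * s)) * TOp k₂ s h x) (Ioi (0:ℝ)) :=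
      Res_integrand_integrable hprob₂ hjm₂ hl hb hmh x le_rfl
    rw [hcongr, integral_sub hi1 hi2, integral_const_mul]
    rfl
  rw [h4] at h3
  linarith

end Kernel4

/-- A transition semigroup whose full generator has bp-dense domain is uniquely determined
by its full generator: two transition semigroups with the same full generator coincide. -/
theorem transition_semigroup_unique_from_full_generator
    {X : Type*} [MetricSpace X] [CompleteSpace X]
    [TopologicalSpace.SeparableSpace X] [MeasurableSpace X] [BorelSpace X]
    (k₁ k₂ : ℝ → X → Measure X)
    (hprob₁ : ∀ t, 0 ≤ t → ∀ x, IsProbabilityMeasure (k₁ t x))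
    (hprob₂ : ∀ t, 0 ≤ t → ∀ x, IsProbabilityMeasure (k₂ t x))
    (hker₁ : ∀ t, 0 ≤ t → ∀ A : Set X, MeasurableSet A → Measurable fun x => k₁ t x A)
    (hker₂ : ∀ t, 0 ≤ t → ∀ A : Set X, MeasurableSet A → Measurable fun x => k₂ t x A)
    (hzero₁ : ∀ x, k₁ 0 x = Measure.dirac x)
    (hzero₂ : ∀ x, k₂ 0 x = Measure.dirac x)
    (hsg₁ : ∀ t s, 0 ≤ t → 0 ≤ s → ∀ f : X → ℝ, (∃ C, ∀ x, |f x| ≤ C) → Measurable f →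
      ∀ x, TOp k₁ t (TOp k₁ s f) x = TOp k₁ (t + s) f x)
    (hsg₂ : ∀ t s, 0 ≤ t → 0 ≤ s → ∀ f : X → ℝ, (∃ C, ∀ x, |f x| ≤ C) → Measurable f →
      ∀ x, TOp k₂ t (TOp k₂ s f) x = TOp k₂ (t + s) f x)
    (hjm₁ : ∀ f : X → ℝ, (∃ C, ∀ x, |f x| ≤ C) → Measurable f →
      Measurable fun p : ℝ × X => TOp k₁ p.1 f p.2)
    (hjm₂ : ∀ f : X → ℝ, (∃ C, ∀ x, |f x| ≤ C) → Measurable f →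
      Measurable fun p : ℝ × X => TOp k₂ p.1 f p.2)
    (hgeneq : ∀ f g : X → ℝ, InFullGen k₁ f g ↔ InFullGen k₂ f g)
    (hdense : ∀ M : Set (X → ℝ), BPClosed M →
      {f : X → ℝ | ∃ g, InFullGen k₁ f g} ⊆ M →
      ∀ f : X → ℝ, (∃ C, ∀ x, |f x| ≤ C) → Measurable f → f ∈ M) :
    ∀ t, 0 ≤ t → ∀ f : X → ℝ, (∃ C, ∀ x, |f x| ≤ C) → Measurable f →
      ∀ x, TOp k₁ t f x = TOp k₂ t f x := by
  intro t ht f hbf hmf x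
  rcases eq_or_lt_of_le ht with rfl | htpos
  · -- t = 0
    show (∫ y, f y ∂(k₁ 0 x)) = ∫ y, f y ∂(k₂ 0 x)
    rw [hzero₁ x, hzero₂ x]
  · -- t > 0
    set M : Set (X → ℝ) := {f : X → ℝ | Measurable f ∧ (∃ C, ∀ x, |f x| ≤ C) ∧
      ∀ x, TOp k₁ t f x = TOp k₂ t f x} with hM
    have hbp : BPClosed M := by
      intro F f0 hFM hFC hlim
      obtain ⟨C, hC⟩ := hFC
      have hmF : ∀ n, Measurable (F n) := fun n => (hFM n).1
      have hm0 : Measurable f0 :=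
        measurable_of_tendsto_metrizable hmF (tendsto_pi_nhds.2 hlim)
      refine ⟨hm0, ⟨C, fun y => ?_⟩, fun y => ?_⟩
      · exact le_of_tendsto ((hlim y).abs) (Filter.Eventually.of_forall fun n => hC n y)
      · haveI := hprob₁ t (le_of_lt htpos) y
        haveI := hprob₂ t (le_of_lt htpos) y
        have h1 : Tendsto (fun n => TOp k₁ t (F n) y) atTop (𝓝 (TOp k₁ t f0 y)) := by
          apply tendsto_integral_of_dominated_convergence (bound := fun _ => C)
          · exact fun n => (hmF n).aestronglyMeasurable
          · exact integrable_const C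
          · exact fun n => ae_of_all _ fun z => by simpa [Real.norm_eq_abs] using hC n z
          · exact ae_of_all _ fun z => hlim z
        have h2 : Tendsto (fun n => TOp k₂ t (F n) y) atTop (𝓝 (TOp k₂ t f0 y)) := by
          apply tendsto_integral_of_dominated_convergence (bound := fun _ => C)
          · exact fun n => (hmF n).aestronglyMeasurable
          · exact integrable_const C
          · exact fun n => ae_of_all _ fun z => by simpa [Real.norm_eq_abs] using hC n z
          · exact ae_of_all _ fun z => hlim z
        have h12 : (fun n => TOp k₁ t (F n) y) = fun n => TOp k₂ t (F n) y :=
          funext fun n => (hFM n).2.2 y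
        rw [h12] at h1
        exact tendsto_nhds_unique h1 h2
    have hsub : {f : X → ℝ | ∃ g, InFullGen k₁ f g} ⊆ M := by
      rintro f' ⟨g, hfg⟩
      have hfg₂ := (hgeneq f' g).1 hfg
      obtain ⟨⟨Cf, hCf⟩, hmf', ⟨Cg, hCg⟩, hmg, hrel₁⟩ := hfg
      have hrel₂ := hfg₂.2.2.2.2
      refine ⟨hmf', ⟨Cf, hCf⟩, fun y => ?_⟩
      have hCg0 : 0 ≤ Cg := le_trans (abs_nonneg _) (hCg y)
      set ψ : ℝ → ℝ := fun s => (if 0 < s then TOp k₁ s g y else 0)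
        - (if 0 < s then TOp k₂ s g y else 0) with hψ
      have hmA : Measurable fun s => if 0 < s then TOp k₁ s g y else 0 :=
        Measurable.ite measurableSet_Ioi (TOp_meas_t hjm₁ ⟨Cg, hCg⟩ hmg y) measurable_const
      have hmB : Measurable fun s => if 0 < s then TOp k₂ s g y else 0 :=
        Measurable.ite measurableSet_Ioi (TOp_meas_t hjm₂ ⟨Cg, hCg⟩ hmg y) measurable_const
      have hbA : ∀ s : ℝ, |if 0 < s then TOp k₁ s g y else 0| ≤ Cg := by
        intro s
        split_ifs with hs
        · exact TOp_abs_le hprob₁ hCg hs.le y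
        · simpa using hCg0
      have hbB : ∀ s : ℝ, |if 0 < s then TOp k₂ s g y else 0| ≤ Cg := by
        intro s
        split_ifs with hs
        · exact TOp_abs_le hprob₂ hCg hs.le y
        · simpa using hCg0
      have hψm : Measurable ψ := hmA.sub hmB
      have hψb : ∀ s, |ψ s| ≤ Cg + Cg := by
        intro s
        rw [hψ]
        exact le_trans (abs_sub _ _) (add_le_add (hbA s) (hbB s))
      have hmom : ∀ n : ℕ, ∫ s in Ioi (0:ℝ), Real.exp (-(((n:ℝ)+1) * s)) * ψ s = 0 := by
        intro n
        set l : ℝ := (n:ℝ) + 1 with hldef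
        have hl : 0 < l := by positivity
        have hiA : IntegrableOn
            (fun s => Real.exp (-(l * s)) * (if 0 < s then TOp k₁ s g y else 0))
            (Ioi (0:ℝ)) := integrable_exp_mul_bdd hl hmA (fun s _ => hbA s)
        have hiB : IntegrableOn
            (fun s => Real.exp (-(l * s)) * (if 0 < s then TOp k₂ s g y else 0))
            (Ioi (0:ℝ)) := integrable_exp_mul_bdd hl hmB (fun s _ => hbB s)
        have hsplit : ∫ s in Ioi (0:ℝ), Real.exp (-(l * s)) * ψ s
            = (∫ s in Ioi (0:ℝ), Real.exp (-(l * s)) * (if 0 < s then TOp k₁ s g y else 0))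
              - ∫ s in Ioi (0:ℝ), Real.exp (-(l * s)) * (if 0 < s then TOp k₂ s g y else 0) := by
          rw [← integral_sub hiA hiB]
          refine setIntegral_congr_fun measurableSet_Ioi fun s _ => ?_
          rw [hψ]
          ring
        have e₁ : ∫ s in Ioi (0:ℝ), Real.exp (-(l * s)) * (if 0 < s then TOp k₁ s g y else 0)
            = Res k₁ l g y := by
          refine setIntegral_congr_fun measurableSet_Ioi fun s hs => ?_
          have hs' : (0:ℝ) < s := hs
          simp only [hs', if_true]
        have e₂ : ∫ s in Ioi (0:ℝ), Real.exp (-(l * s)) * (if 0 < s then TOp k₂ s g y else 0)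
            = Res k₂ l g y := by
          refine setIntegral_congr_fun measurableSet_Ioi fun s hs => ?_
          have hs' : (0:ℝ) < s := hs
          simp only [hs', if_true]
        have hreq := Res_eq hprob₁ hprob₂ hjm₁ hjm₂ hsg₁ hgeneq hl hCg hmg y
        calc ∫ s in Ioi (0:ℝ), Real.exp (-(l * s)) * ψ s = _ := hsplit
        _ = Res k₁ l g y - Res k₂ l g y := by rw [e₁, e₂]
        _ = 0 := by rw [hreq, sub_self]
      have hae := laplace_unique hψm hψb hmom
      have hae2 : ∀ᵐ s ∂(volume.restrict (Ioc (0:ℝ) t)), ψ s = 0 :=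
        ae_restrict_of_ae_restrict_of_subset Ioc_subset_Ioi_self hae
      have hψ0 : ∫ s in Ioc (0:ℝ) t, ψ s = 0 := integral_eq_zero_of_ae hae2
      have hi₁ : IntegrableOn (fun s => TOp k₁ s g y) (Ioc (0:ℝ) t) :=
        integrableOn_bdd_meas' (TOp_meas_t hjm₁ ⟨Cg, hCg⟩ hmg y) measurableSet_Ioc
          (fun s hs => TOp_abs_le hprob₁ hCg hs.1.le y) measure_Ioc_lt_top
      have hi₂ : IntegrableOn (fun s => TOp k₂ s g y) (Ioc (0:ℝ) t) :=
        integrableOn_bdd_meas' (TOp_meas_t hjm₂ ⟨Cg, hCg⟩ hmg y) measurableSet_Ioc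
          (fun s hs => TOp_abs_le hprob₂ hCg hs.1.le y) measure_Ioc_lt_top
      have hdiff : (∫ s in Ioc (0:ℝ) t, TOp k₁ s g y) - ∫ s in Ioc (0:ℝ) t, TOp k₂ s g y
          = ∫ s in Ioc (0:ℝ) t, ψ s := by
        rw [← integral_sub hi₁ hi₂]
        refine setIntegral_congr_fun measurableSet_Ioc fun s hs => ?_
        rw [hψ]
        simp only [hs.1, if_true]
      have e1 := hrel₁ t htpos y
      have e2 := hrel₂ t htpos y
      linarith
    exact (hdense M hbp hsub f hbf hmf).2.2 x
end
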